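/- arXiv:1106.5736 — 6 statements merged into one kernel-verified Lean document; each statement's English description precedes it below -/
import Mathlib

section
/- Lower bound on God's Number for the n×n×1 Rubik's Cube: for every n ≥ 2 there exists g ∈ G(n) such that for every k ∈ ℕ and all moves m₁, …, m_k ∈ S(n) with c₀ ∘ (m_k ⋯ m₁ g)⁻¹ = c₀, one has (2n)^(k+1) ≥ 6^((⌊n/2⌋−1)²). In particular some configurations of the n×n×1 Rubik's Cube are Ω(n²/log n) moves away from being solved. -/
/-- Sticker positions of the `n × n × 1` Rubik's Cube. -/
abbrev RPos (n : ℕ) := Fin n × Fin n × Bool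

/-- Underlying function of the row move `ρ i`. -/
def rowMoveFun (n : ℕ) (i : Fin n) : RPos n → RPos n :=
  fun p => if p.2.1 = i then (p.1.rev, p.2.1, !p.2.2) else p

theorem rowMoveFun_involutive (n : ℕ) (i : Fin n) :
    Function.Involutive (rowMoveFun n i) := by
  rintro ⟨x, y, b⟩
  by_cases h : y = i <;> simp [rowMoveFun, h]

/-- The row move `ρ i`. -/
def rowMove (n : ℕ) (i : Fin n) : Equiv.Perm (RPos n) :=
  (rowMoveFun_involutive n i).toPerm _

/-- Underlying function of the column move `σ j`. -/
def colMoveFun (n : ℕ) (j : Fin n) : RPos n → RPos n :=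
  fun p => if p.1 = j then (p.1, p.2.1.rev, !p.2.2) else p

theorem colMoveFun_involutive (n : ℕ) (j : Fin n) :
    Function.Involutive (colMoveFun n j) := by
  rintro ⟨x, y, b⟩
  by_cases h : x = j <;> simp [colMoveFun, h]

/-- The column move `σ j`. -/
def colMove (n : ℕ) (j : Fin n) : Equiv.Perm (RPos n) :=
  (colMoveFun_involutive n j).toPerm _

/-- The set `S(n)` of the `2n` legal moves. -/
def RMoves (n : ℕ) : Set (Equiv.Perm (RPos n)) :=
  Set.range (rowMove n) ∪ Set.range (colMove n)

/-- The group `G(n)` generated by the legal moves. -/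
def RGroup (n : ℕ) : Subgroup (Equiv.Perm (RPos n)) :=
  Subgroup.closure (RMoves n)

/-- The solved coloring `c₀`. -/
def solvedColoring (n : ℕ) : RPos n → Bool := fun p => p.2.2

/-- The cluster `Cl(x, y)`. -/
def cluster (n : ℕ) (x y : Fin n) : Set (RPos n) :=
  {p | (p.1 = x ∨ p.1 = x.rev) ∧ (p.2.1 = y ∨ p.2.1 = y.rev)}

/-- The configuration of cluster `(x, y)` under a coloring `c`. -/
def clusterConfig (n : ℕ) (c : RPos n → Bool) (x y : Fin n) :
    Bool × Bool → Bool :=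
  fun q => c (if q.1 then x.rev else x, if q.2 then y.rev else y, true)

/-- An interior index pair: `1 ≤ x ≤ ⌊n/2⌋ − 1` and `1 ≤ y ≤ ⌊n/2⌋ − 1`. -/
def Interior (n : ℕ) (x y : Fin n) : Prop :=
  1 ≤ (x : ℕ) ∧ (x : ℕ) ≤ n / 2 - 1 ∧ 1 ≤ (y : ℕ) ∧ (y : ℕ) ≤ n / 2 - 1

/-- The six standard patterns: functions `Bool × Bool → Bool` whose value is
independent of the second argument or independent of the first argument. -/
def StandardPattern (f : Bool × Bool → Bool) : Prop :=
  (∀ ε δ δ', f (ε, δ) = f (ε, δ')) ∨ (∀ ε ε' δ, f (ε, δ) = f (ε', δ))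

/-! ### Auxiliary development -/

namespace GodsNumberAux

lemma rowMove_apply (n : ℕ) (i : Fin n) (p : RPos n) :
    rowMove n i p = if p.2.1 = i then (p.1.rev, p.2.1, !p.2.2) else p := rfl

lemma colMove_apply (n : ℕ) (j : Fin n) (p : RPos n) :
    colMove n j p = if p.1 = j then (p.1, p.2.1.rev, !p.2.2) else p := rfl

lemma rowMove_inv (n : ℕ) (i : Fin n) : (rowMove n i)⁻¹ = rowMove n i := rfl
lemma colMove_inv (n : ℕ) (j : Fin n) : (colMove n j)⁻¹ = colMove n j := rfl

/-- The six standard pattern functions. -/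
def patFun : Fin 6 → Bool × Bool → Bool
  | 0 => fun _ => true
  | 1 => fun _ => false
  | 2 => fun q => q.1
  | 3 => fun q => !q.1
  | 4 => fun q => q.2
  | 5 => fun q => !q.2

lemma patFun_injective : Function.Injective patFun := by decide

/-- Word realizing pattern `t` on cluster `(x, y)`. -/
def clusterWord (n : ℕ) (x y : Fin n) : Fin 6 → List (Equiv.Perm (RPos n))
  | 0 => []
  | 1 => [rowMove n y, rowMove n y.rev, colMove n x,
          rowMove n y, rowMove n y.rev, colMove n x]
  | 2 => [colMove n x, rowMove n y, colMove n x, rowMove n y]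
  | 3 => [colMove n x.rev, rowMove n y, colMove n x.rev, rowMove n y]
  | 4 => [rowMove n y, colMove n x, rowMove n y, colMove n x]
  | 5 => [rowMove n y.rev, colMove n x, rowMove n y.rev, colMove n x]

lemma rowMove_mem (n : ℕ) (i : Fin n) : rowMove n i ∈ RMoves n := Or.inl ⟨i, rfl⟩
lemma colMove_mem (n : ℕ) (j : Fin n) : colMove n j ∈ RMoves n := Or.inr ⟨j, rfl⟩

lemma clusterWord_mem (n : ℕ) (x y : Fin n) (t : Fin 6) :
    ∀ e ∈ clusterWord n x y t, e ∈ RMoves n := by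
  fin_cases t <;> simp [clusterWord, rowMove_mem, colMove_mem]

section Cluster

variable {n : ℕ} {x y : Fin n}

/-- Interior-style hypotheses packaged as plain arithmetic. -/
lemma rev_facts (h : 2 * (x : ℕ) + 2 ≤ n) : x ≠ x.rev ∧ x.rev ≠ x := by
  have hv : (x.rev : ℕ) = n - (x + 1) := Fin.val_rev x
  constructor <;> intro hh <;> apply_fun (Fin.val) at hh <;> omega

lemma clusterWord_pattern (hx : 2 * (x : ℕ) + 2 ≤ n) (hy : 2 * (y : ℕ) + 2 ≤ n)
    (t : Fin 6) (ε δ : Bool) :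
    solvedColoring n (((clusterWord n x y t).prod)⁻¹
      (if ε then x.rev else x, if δ then y.rev else y, true)) = patFun t (ε, δ) := by
  obtain ⟨hx1, hx2⟩ := rev_facts hx
  obtain ⟨hy1, hy2⟩ := rev_facts hy
  fin_cases t <;> cases ε <;> cases δ <;>
    simp [clusterWord, patFun, solvedColoring, mul_inv_rev, rowMove_inv, colMove_inv,
      Equiv.Perm.mul_apply, rowMove_apply, colMove_apply, Fin.rev_rev, hx1, hx2, hy1, hy2]

end Cluster

end GodsNumberAux

namespace GodsNumberAux

section Cluster2

variable {n : ℕ} {x y : Fin n}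

lemma clusterWord_fix (hx : 2 * (x : ℕ) + 2 ≤ n) (hy : 2 * (y : ℕ) + 2 ≤ n)
    (t : Fin 6) (p : RPos n) (hp : p ∉ cluster n x y) :
    (clusterWord n x y t).prod p = p := by
  obtain ⟨a, c, b⟩ := p
  rw [cluster, Set.mem_setOf_eq] at hp
  rcases not_and_or.mp hp with h | h
  · push_neg at h
    obtain ⟨ha1, ha2⟩ := h
    have ha3 : a.rev ≠ x := fun hh => ha2 (by rw [← hh, Fin.rev_rev])
    have ha4 : a.rev ≠ x.rev := fun hh => ha1 (Fin.rev_injective hh)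
    obtain ⟨hy1, hy2⟩ := rev_facts hy
    by_cases hc : c = y
    · subst hc
      fin_cases t <;>
        simp [clusterWord, Equiv.Perm.mul_apply, rowMove_apply, colMove_apply,
          Fin.rev_rev, ha1, ha2, ha3, ha4, hy1, hy2]
    · by_cases hc' : c = y.rev
      · subst hc'
        fin_cases t <;>
          simp [clusterWord, Equiv.Perm.mul_apply, rowMove_apply, colMove_apply,
            Fin.rev_rev, ha1, ha2, ha3, ha4, hy1, hy2]
      · fin_cases t <;>
          simp [clusterWord, Equiv.Perm.mul_apply, rowMove_apply, colMove_apply,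
            Fin.rev_rev, ha1, ha2, ha3, ha4, hc, hc']
  · push_neg at h
    obtain ⟨hc1, hc2⟩ := h
    have hc3 : c.rev ≠ y := fun hh => hc2 (by rw [← hh, Fin.rev_rev])
    have hc4 : c.rev ≠ y.rev := fun hh => hc1 (Fin.rev_injective hh)
    obtain ⟨hx1, hx2⟩ := rev_facts hx
    by_cases ha : a = x
    · subst ha
      fin_cases t <;>
        simp [clusterWord, Equiv.Perm.mul_apply, rowMove_apply, colMove_apply,
          Fin.rev_rev, hc1, hc2, hc3, hc4, hx1, hx2]
    · by_cases ha' : a = x.rev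
      · subst ha'
        fin_cases t <;>
          simp [clusterWord, Equiv.Perm.mul_apply, rowMove_apply, colMove_apply,
            Fin.rev_rev, hc1, hc2, hc3, hc4, hx1, hx2]
      · fin_cases t <;>
          simp [clusterWord, Equiv.Perm.mul_apply, rowMove_apply, colMove_apply,
            Fin.rev_rev, hc1, hc2, hc3, hc4, ha, ha']

lemma move_preserves_cluster {e : Equiv.Perm (RPos n)} (he : e ∈ RMoves n)
    {p : RPos n} (hp : p ∈ cluster n x y) : e p ∈ cluster n x y := by
  rcases he with ⟨i, rfl⟩ | ⟨j, rfl⟩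
  · rw [rowMove_apply]
    split
    · obtain ⟨h1, h2⟩ := hp
      refine ⟨?_, h2⟩
      rcases h1 with h | h <;> simp [h, Fin.rev_rev]
    · exact hp
  · rw [colMove_apply]
    split
    · obtain ⟨h1, h2⟩ := hp
      refine ⟨h1, ?_⟩
      rcases h2 with h | h <;> simp [h, Fin.rev_rev]
    · exact hp

lemma prod_preserves_cluster {l : List (Equiv.Perm (RPos n))}
    (hl : ∀ e ∈ l, e ∈ RMoves n) {p : RPos n} (hp : p ∈ cluster n x y) :
    l.prod p ∈ cluster n x y := by
  induction l with
  | nil => simpa using hp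
  | cons e l ih =>
    rw [List.prod_cons, Equiv.Perm.mul_apply]
    exact move_preserves_cluster (hl e (by simp))
      (ih (fun e' he' => hl e' (by simp [he'])))

lemma inv_mem_RMoves {e : Equiv.Perm (RPos n)} (he : e ∈ RMoves n) :
    e⁻¹ ∈ RMoves n := by
  rcases he with ⟨i, rfl⟩ | ⟨j, rfl⟩
  · rw [rowMove_inv]; exact Or.inl ⟨i, rfl⟩
  · rw [colMove_inv]; exact Or.inr ⟨j, rfl⟩

lemma prod_inv_preserves_cluster {l : List (Equiv.Perm (RPos n))}
    (hl : ∀ e ∈ l, e ∈ RMoves n) {p : RPos n} (hp : p ∈ cluster n x y) :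
    (l.prod)⁻¹ p ∈ cluster n x y := by
  rw [List.prod_inv_reverse]
  refine prod_preserves_cluster ?_ hp
  intro e he
  rw [List.mem_reverse, List.mem_map] at he
  obtain ⟨e', he', rfl⟩ := he
  exact inv_mem_RMoves (hl e' he')

lemma class_eq {a u v : Fin n} (hu : 2 * (u : ℕ) + 2 ≤ n) (hv : 2 * (v : ℕ) + 2 ≤ n)
    (h1 : a = u ∨ a = u.rev) (h2 : a = v ∨ a = v.rev) : u = v := by
  have r1 : (u.rev : ℕ) = n - (u + 1) := Fin.val_rev u
  have r2 : (v.rev : ℕ) = n - (v + 1) := Fin.val_rev v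
  rcases h1 with rfl | rfl <;> rcases h2 with h | h <;>
    · apply Fin.ext
      apply_fun Fin.val at h
      omega

end Cluster2

end GodsNumberAux

namespace GodsNumberAux

section Flat

variable {n m : ℕ}

/-- Embedding of interior grid coordinates. -/
def ι (n : ℕ) (i : Fin (n / 2 - 1)) : Fin n :=
  ⟨i + 1, by have := i.isLt; omega⟩

lemma ι_facts (i : Fin (n / 2 - 1)) : 2 * ((ι n i : Fin n) : ℕ) + 2 ≤ n := by
  have := i.isLt; simp only [ι]; omega

lemma ι_injective : Function.Injective (ι n) := by
  intro i j h
  apply Fin.ext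
  have := congrArg Fin.val h
  simpa [ι] using this

abbrev Grid (n : ℕ) := Fin (n / 2 - 1) × Fin (n / 2 - 1)

lemma flat_prod_on_cluster (P : Grid n → Fin 6)
    (l : List (Grid n)) (hnd : l.Nodup) (q0 : Grid n) (p : RPos n)
    (hp : p ∈ cluster n (ι n q0.1) (ι n q0.2)) :
    (l.flatMap fun q => clusterWord n (ι n q.1) (ι n q.2) (P q)).prod p =
      if q0 ∈ l then (clusterWord n (ι n q0.1) (ι n q0.2) (P q0)).prod p else p := by
  induction l with
  | nil => simp
  | cons q l ih =>
    have hnd' : l.Nodup := hnd.of_cons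
    rw [List.flatMap_cons, List.prod_append, Equiv.Perm.mul_apply, ih hnd']
    by_cases h0 : q0 ∈ l
    · rw [if_pos h0, if_pos (List.mem_cons_of_mem _ h0)]
      have hqq0 : q ≠ q0 := fun hh => (List.nodup_cons.mp hnd).1 (hh ▸ h0)
      set p' := (clusterWord n (ι n q0.1) (ι n q0.2) (P q0)).prod p with hp'def
      have hp' : p' ∈ cluster n (ι n q0.1) (ι n q0.2) :=
        prod_preserves_cluster (clusterWord_mem n _ _ _) hp
      refine clusterWord_fix (ι_facts q.1) (ι_facts q.2) _ _ ?_
      intro hmem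
      apply hqq0
      have h1 : q.1 = q0.1 :=
        ι_injective (class_eq (ι_facts q.1) (ι_facts q0.1) hmem.1 hp'.1)
      have h2 : q.2 = q0.2 :=
        ι_injective (class_eq (ι_facts q.2) (ι_facts q0.2) hmem.2 hp'.2)
      exact Prod.ext h1 h2
    · rw [if_neg h0]
      by_cases hq : q = q0
      · subst hq
        rw [if_pos (List.mem_cons_self)]
      · rw [if_neg (by simp [h0]; exact fun hh => hq hh.symm)]
        refine clusterWord_fix (ι_facts q.1) (ι_facts q.2) _ _ ?_
        intro hmem
        apply hq
        have h1 : q.1 = q0.1 :=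
          ι_injective (class_eq (ι_facts q.1) (ι_facts q0.1) hmem.1 hp.1)
        have h2 : q.2 = q0.2 :=
          ι_injective (class_eq (ι_facts q.2) (ι_facts q0.2) hmem.2 hp.2)
        exact Prod.ext h1 h2

/-- The list of all moves realizing the pattern assignment `P`. -/
noncomputable def gList (n : ℕ) (P : Grid n → Fin 6) : List (Equiv.Perm (RPos n)) :=
  (Finset.univ : Finset (Grid n)).toList.flatMap
    fun q => clusterWord n (ι n q.1) (ι n q.2) (P q)

noncomputable def gP (n : ℕ) (P : Grid n → Fin 6) : Equiv.Perm (RPos n) :=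
  (gList n P).prod

lemma gList_mem (P : Grid n → Fin 6) : ∀ e ∈ gList n P, e ∈ RMoves n := by
  intro e he
  rw [gList, List.mem_flatMap] at he
  obtain ⟨q, _, he⟩ := he
  exact clusterWord_mem n _ _ _ e he

lemma gP_mem (P : Grid n → Fin 6) : gP n P ∈ RGroup n := by
  refine Subgroup.list_prod_mem _ fun e he => ?_
  exact Subgroup.subset_closure (gList_mem P e he)

lemma gP_config (P : Grid n → Fin 6) (q0 : Grid n) :
    clusterConfig n (solvedColoring n ∘ ⇑(gP n P)⁻¹) (ι n q0.1) (ι n q0.2)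
      = patFun (P q0) := by
  funext εδ
  obtain ⟨ε, δ⟩ := εδ
  rw [clusterConfig]
  set pt : RPos n := (if ε then (ι n q0.1).rev else ι n q0.1,
    if δ then (ι n q0.2).rev else ι n q0.2, true) with hpt
  have hptc : pt ∈ cluster n (ι n q0.1) (ι n q0.2) := by
    constructor
    · cases ε <;> simp [hpt]
    · cases δ <;> simp [hpt]
  set e0 := (clusterWord n (ι n q0.1) (ι n q0.2) (P q0)).prod with he0
  have hinv : (gP n P)⁻¹ pt = e0⁻¹ pt := by
    rw [Equiv.Perm.inv_def, Equiv.symm_apply_eq]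
    have hmem : e0⁻¹ pt ∈ cluster n (ι n q0.1) (ι n q0.2) :=
      prod_inv_preserves_cluster (clusterWord_mem n _ _ _) hptc
    have := flat_prod_on_cluster P (Finset.univ : Finset (Grid n)).toList
      (Finset.nodup_toList _) q0 (e0⁻¹ pt) hmem
    rw [if_pos (by simp)] at this
    rw [gP, gList, this, ← he0, Equiv.Perm.inv_def, Equiv.apply_symm_apply]
  simp only [Function.comp_apply, hinv]
  exact clusterWord_pattern (ι_facts q0.1) (ι_facts q0.2) (P q0) ε δ

lemma gP_coloring_injective :
    Function.Injective (fun P : Grid n → Fin 6 => solvedColoring n ∘ ⇑(gP n P)⁻¹) := by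
  intro P P' h
  funext q
  apply patFun_injective
  rw [← gP_config P q, ← gP_config P' q]
  simp only at h
  rw [h]

end Flat

end GodsNumberAux

namespace GodsNumberAux

section Counting

variable {n : ℕ}

/-- The finset of all legal moves. -/
def MS (n : ℕ) : Finset (Equiv.Perm (RPos n)) :=
  Finset.image (rowMove n) Finset.univ ∪ Finset.image (colMove n) Finset.univ

lemma card_MS : (MS n).card ≤ 2 * n := by
  have h1 : (Finset.image (rowMove n) Finset.univ).card ≤ n := by
    refine le_trans (Finset.card_image_le) (by simp)
  have h2 : (Finset.image (colMove n) Finset.univ).card ≤ n := by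
    refine le_trans (Finset.card_image_le) (by simp)
  calc (MS n).card ≤ _ + _ := Finset.card_union_le _ _
    _ ≤ 2 * n := by omega

lemma mem_MS {e : Equiv.Perm (RPos n)} (he : e ∈ RMoves n) : e ∈ MS n := by
  rcases he with ⟨i, rfl⟩ | ⟨j, rfl⟩
  · exact Finset.mem_union_left _ (Finset.mem_image_of_mem _ (Finset.mem_univ i))
  · exact Finset.mem_union_right _ (Finset.mem_image_of_mem _ (Finset.mem_univ j))

/-- Colorings reachable using at most `k` moves. -/
def EE (n : ℕ) : ℕ → Finset (RPos n → Bool)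
  | 0 => {solvedColoring n}
  | (k + 1) => insert (solvedColoring n)
      ((EE n k).biUnion fun c => (MS n).image fun mm : Equiv.Perm (RPos n) => c ∘ ⇑mm)

lemma card_EE (hn : 1 ≤ n) : ∀ k, (EE n k).card ≤ (2 * n) ^ (k + 1) - 1 := by
  intro k
  induction k with
  | zero =>
    simp only [EE, Finset.card_singleton, zero_add, pow_one]
    omega
  | succ k ih =>
    have hb : ((EE n k).biUnion fun c => (MS n).image
        fun mm : Equiv.Perm (RPos n) => c ∘ ⇑mm).card ≤ (EE n k).card * (2 * n) := by
      refine le_trans Finset.card_biUnion_le ?_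
      calc ∑ c ∈ EE n k, ((MS n).image fun mm : Equiv.Perm (RPos n) => c ∘ ⇑mm).card
          ≤ ∑ _c ∈ EE n k, 2 * n :=
            Finset.sum_le_sum fun c _ => le_trans Finset.card_image_le card_MS
        _ = (EE n k).card * (2 * n) := by
            rw [Finset.sum_const, smul_eq_mul]
    have h1 : (EE n (k + 1)).card ≤ 1 + (EE n k).card * (2 * n) := by
      rw [EE]
      exact le_trans (Finset.card_insert_le _ _) (by omega)
    have h4 : (EE n k).card * (2 * n) ≤ ((2 * n) ^ (k + 1) - 1) * (2 * n) :=
      Nat.mul_le_mul_right _ ih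
    have hpow : 1 ≤ (2 * n) ^ (k + 1) := Nat.one_le_pow _ _ (by omega)
    have h5 : ((2 * n) ^ (k + 1) - 1) * (2 * n) = (2 * n) ^ (k + 1 + 1) - 2 * n := by
      rw [Nat.sub_mul, ← pow_succ]
      omega
    have hpow3 : 2 * n ≤ (2 * n) ^ (k + 1 + 1) := Nat.le_self_pow (by omega) _
    omega

lemma mem_EE : ∀ (k : ℕ) (L : List (Equiv.Perm (RPos n))),
    (∀ e ∈ L, e ∈ RMoves n) → L.length ≤ k →
    (solvedColoring n ∘ ⇑(L.prod)) ∈ EE n k := by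
  intro k
  induction k with
  | zero =>
    intro L _hL hlen
    rw [List.length_eq_zero_iff.mp (Nat.le_zero.mp hlen)]
    simp [EE]
  | succ k ih =>
    intro L hL hlen
    rcases L.eq_nil_or_concat with rfl | ⟨L', e, hcat⟩
    · simp [EE]
    · rw [List.concat_eq_append] at hcat
      subst hcat
      have hlen' : L'.length ≤ k := by
        simp only [List.length_append, List.length_singleton] at hlen
        omega
      have hL' : ∀ e' ∈ L', e' ∈ RMoves n := fun e' he' => hL e' (by simp [he'])
      have hmm : e ∈ MS n := mem_MS (hL e (by simp))
      have heq : solvedColoring n ∘ ⇑((L' ++ [e]).prod)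
          = (solvedColoring n ∘ ⇑(L'.prod)) ∘ ⇑e := by
        rw [List.prod_append, List.prod_singleton]
        rfl
      rw [EE, heq]
      exact Finset.mem_insert_of_mem
        (Finset.mem_biUnion.mpr ⟨_, ih L' hL' hlen', Finset.mem_image_of_mem _ hmm⟩)

end Counting

end GodsNumberAux


open GodsNumberAux

/-- **Lower bound on God's Number for the `n × n × 1` Rubik's Cube.**
For every `n ≥ 2` there is a reachable configuration `g ∈ G(n)` such that any
sequence of legal moves `m₁, …, m_k` solving it satisfies
`(2n)^(k+1) ≥ 6^((⌊n/2⌋−1)²)`. -/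
theorem nxnx1_gods_number_lower_bound (n : ℕ) (hn : 2 ≤ n) :
    ∃ g ∈ RGroup n, ∀ L : List (Equiv.Perm (RPos n)),
      (∀ m ∈ L, m ∈ RMoves n) →
      solvedColoring n ∘ ⇑(L.prod * g)⁻¹ = solvedColoring n →
      6 ^ ((n / 2 - 1) ^ 2) ≤ (2 * n) ^ (L.length + 1) := by
  by_contra hcon
  push_neg at hcon
  choose F h1 h2 h3 using fun P : Grid n → Fin 6 => hcon (gP n P) (gP_mem P)
  have hcol : ∀ P : Grid n → Fin 6,
      solvedColoring n ∘ ⇑(gP n P)⁻¹ = solvedColoring n ∘ ⇑((F P).prod) := by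
    intro P
    funext pt
    have := congrFun (h2 P) ((F P).prod pt)
    simpa [mul_inv_rev, Equiv.Perm.mul_apply] using this
  set K := Finset.univ.sup (fun P : Grid n → Fin 6 => (F P).length) with hKdef
  have hK : ∀ P : Grid n → Fin 6, (F P).length ≤ K :=
    fun P => Finset.le_sup (f := fun P : Grid n → Fin 6 => (F P).length) (Finset.mem_univ P)
  have hmem : ∀ P : Grid n → Fin 6, solvedColoring n ∘ ⇑(gP n P)⁻¹ ∈ EE n K := by
    intro P
    rw [hcol P]
    exact mem_EE K (F P) (h1 P) (hK P)
  have hcard : Fintype.card (Grid n → Fin 6) ≤ (EE n K).card := by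
    rw [← Finset.card_univ]
    exact Finset.card_le_card_of_injOn _ (fun P _ => hmem P)
      (gP_coloring_injective.injOn)
  have hcard2 : Fintype.card (Grid n → Fin 6) = 6 ^ ((n / 2 - 1) ^ 2) := by
    rw [Fintype.card_fun]
    congr 1
    rw [Fintype.card_prod, Fintype.card_fin, pow_two]
  obtain ⟨Pm, -, hPK⟩ := Finset.exists_mem_eq_sup Finset.univ
    Finset.univ_nonempty (fun P : Grid n → Fin 6 => (F P).length)
  have h3' := h3 Pm
  rw [← hKdef] at hPK
  rw [← hPK] at h3'
  have hEE := card_EE (by omega : 1 ≤ n) K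
  have hp1 : 1 ≤ (2 * n) ^ (K + 1) := Nat.one_le_pow _ _ (by omega)
  omega
end

section
/- Realizability of arbitrary interior cluster configurations: for every n ≥ 2 and every function A assigning to each interior index pair (x, y) (with 1 ≤ x ≤ ⌊n/2⌋−1 and 1 ≤ y ≤ ⌊n/2⌋−1) one of the six standard patterns, there exists g ∈ G(n) such that for every interior pair (x, y) the configuration of cluster (x, y) under the coloring c₀ ∘ g⁻¹ equals A(x, y). Consequently the number of distinct reachable colorings c₀ ∘ g⁻¹ with g ∈ G(n) is at least 6^((⌊n/2⌋−1)²). -/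
namespace NxN

variable {n : ℕ}

theorem rowMove_apply (i u v : Fin n) (b : Bool) :
    rowMove n i (u, v, b) = if v = i then (u.rev, v, !b) else (u, v, b) := rfl

theorem colMove_apply (j u v : Fin n) (b : Bool) :
    colMove n j (u, v, b) = if u = j then (u, v.rev, !b) else (u, v, b) := rfl

theorem rowMove_inv (i : Fin n) : (rowMove n i)⁻¹ = rowMove n i := by
  rw [Equiv.Perm.inv_def]; exact Function.Involutive.toPerm_symm _

theorem colMove_inv (j : Fin n) : (colMove n j)⁻¹ = colMove n j := by
  rw [Equiv.Perm.inv_def]; exact Function.Involutive.toPerm_symm _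

/-- The gadget realizing pattern `f` on cluster `(x,y)`. -/
def gadget (n : ℕ) (x y : Fin n) (f : Bool × Bool → Bool) : Equiv.Perm (RPos n) :=
  if f (false, false) = true then
    if f (false, true) = true then
      (if f (true, false) = true then 1
       else colMove n x.rev * rowMove n y * colMove n x.rev * rowMove n y)
    else rowMove n y.rev * colMove n x * rowMove n y.rev * colMove n x
  else
    if f (false, true) = true then
      rowMove n y * colMove n x * rowMove n y * colMove n x
    else
      if f (true, false) = true then
        colMove n x * rowMove n y * colMove n x * rowMove n y
      else
        colMove n x * colMove n x.rev * rowMove n y *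
          colMove n x * colMove n x.rev * rowMove n y

theorem gadget_mem (x y : Fin n) (f : Bool × Bool → Bool) :
    gadget n x y f ∈ RGroup n := by
  have hR : ∀ i : Fin n, rowMove n i ∈ RGroup n := fun i =>
    Subgroup.subset_closure (Or.inl ⟨i, rfl⟩)
  have hC : ∀ j : Fin n, colMove n j ∈ RGroup n := fun j =>
    Subgroup.subset_closure (Or.inr ⟨j, rfl⟩)
  unfold gadget
  split_ifs
  · exact one_mem _
  · exact mul_mem (mul_mem (mul_mem (hC _) (hR _)) (hC _)) (hR _)
  · exact mul_mem (mul_mem (mul_mem (hR _) (hC _)) (hR _)) (hC _)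
  · exact mul_mem (mul_mem (mul_mem (hR _) (hC _)) (hR _)) (hC _)
  · exact mul_mem (mul_mem (mul_mem (hC _) (hR _)) (hC _)) (hR _)
  · exact mul_mem (mul_mem (mul_mem (mul_mem (mul_mem (hC _) (hC _)) (hR _)) (hC _)) (hC _)) (hR _)

theorem fix4a (j i : Fin n) (q : RPos n)
    (h : (q.2.1 ≠ i ∧ q.2.1.rev ≠ i) ∨ (q.1 ≠ j ∧ q.1.rev ≠ j)) :
    (colMove n j * rowMove n i * colMove n j * rowMove n i)⁻¹ q = q := by
  obtain ⟨u, v, b⟩ := q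
  simp only [mul_inv_rev, rowMove_inv, colMove_inv, Equiv.Perm.mul_apply]
  rcases h with ⟨h1, h2⟩ | ⟨h1, h2⟩
  · by_cases hu : u = j <;>
      simp [rowMove_apply, colMove_apply, h1, h2, hu, Fin.rev_rev]
  · by_cases hv : v = i <;>
      simp [rowMove_apply, colMove_apply, h1, h2, hv, Fin.rev_rev]

theorem fix4b (i j : Fin n) (q : RPos n)
    (h : (q.2.1 ≠ i ∧ q.2.1.rev ≠ i) ∨ (q.1 ≠ j ∧ q.1.rev ≠ j)) :
    (rowMove n i * colMove n j * rowMove n i * colMove n j)⁻¹ q = q := by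
  obtain ⟨u, v, b⟩ := q
  simp only [mul_inv_rev, rowMove_inv, colMove_inv, Equiv.Perm.mul_apply]
  rcases h with ⟨h1, h2⟩ | ⟨h1, h2⟩
  · by_cases hu : u = j <;>
      simp [rowMove_apply, colMove_apply, h1, h2, hu, Fin.rev_rev]
  · by_cases hv : v = i <;>
      simp [rowMove_apply, colMove_apply, h1, h2, hv, Fin.rev_rev]

theorem fix6 (j j' i : Fin n) (hjj : j ≠ j') (q : RPos n)
    (h : (q.2.1 ≠ i ∧ q.2.1.rev ≠ i) ∨
      (q.1 ≠ j ∧ q.1.rev ≠ j ∧ q.1 ≠ j' ∧ q.1.rev ≠ j')) :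
    (colMove n j * colMove n j' * rowMove n i *
      colMove n j * colMove n j' * rowMove n i)⁻¹ q = q := by
  obtain ⟨u, v, b⟩ := q
  simp only [mul_inv_rev, rowMove_inv, colMove_inv, Equiv.Perm.mul_apply]
  rcases h with ⟨h1, h2⟩ | ⟨h1, h2, h3, h4⟩
  · by_cases hu : u = j <;> by_cases hu' : u = j' <;>
      simp [rowMove_apply, colMove_apply, h1, h2, hu, hu', hjj, hjj.symm, Fin.rev_rev]
  · by_cases hv : v = i <;>
      simp [rowMove_apply, colMove_apply, h1, h2, h3, h4, hv, Fin.rev_rev]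

theorem rowMove_cluster {x y : Fin n} (i : Fin n) {q : RPos n}
    (hq : q ∈ cluster n x y) : rowMove n i q ∈ cluster n x y := by
  obtain ⟨u, v, b⟩ := q
  obtain ⟨hu, hv⟩ := hq
  replace hu : u = x ∨ u = x.rev := hu
  replace hv : v = y ∨ v = y.rev := hv
  rw [rowMove_apply]
  split_ifs
  · refine ⟨?_, hv⟩
    rcases hu with rfl | rfl
    · exact Or.inr rfl
    · exact Or.inl (Fin.rev_rev x)
  · exact ⟨hu, hv⟩

theorem colMove_cluster {x y : Fin n} (j : Fin n) {q : RPos n}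
    (hq : q ∈ cluster n x y) : colMove n j q ∈ cluster n x y := by
  obtain ⟨u, v, b⟩ := q
  obtain ⟨hu, hv⟩ := hq
  replace hu : u = x ∨ u = x.rev := hu
  replace hv : v = y ∨ v = y.rev := hv
  rw [colMove_apply]
  split_ifs
  · refine ⟨hu, ?_⟩
    rcases hv with rfl | rfl
    · exact Or.inr rfl
    · exact Or.inl (Fin.rev_rev y)
  · exact ⟨hu, hv⟩

theorem gadget_cluster (x y : Fin n) (f : Bool × Bool → Bool) {q : RPos n}
    (hq : q ∈ cluster n x y) : (gadget n x y f)⁻¹ q ∈ cluster n x y := by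
  unfold gadget
  split_ifs <;>
    simp only [inv_one, Equiv.Perm.one_apply, mul_inv_rev, rowMove_inv, colMove_inv,
      Equiv.Perm.mul_apply]
  · exact hq
  · exact rowMove_cluster _ (colMove_cluster _ (rowMove_cluster _ (colMove_cluster _ hq)))
  · exact colMove_cluster _ (rowMove_cluster _ (colMove_cluster _ (rowMove_cluster _ hq)))
  · exact colMove_cluster _ (rowMove_cluster _ (colMove_cluster _ (rowMove_cluster _ hq)))
  · exact rowMove_cluster _ (colMove_cluster _ (rowMove_cluster _ (colMove_cluster _ hq)))
  · exact rowMove_cluster _ (colMove_cluster _ (colMove_cluster _ (rowMove_cluster _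
      (colMove_cluster _ (colMove_cluster _ hq)))))

theorem avoid {a x : Fin n} (ha1 : 1 ≤ (a : ℕ)) (ha2 : (a : ℕ) ≤ n / 2 - 1)
    (hx1 : 1 ≤ (x : ℕ)) (hx2 : (x : ℕ) ≤ n / 2 - 1) (hax : a ≠ x)
    {u : Fin n} (hu : u = x ∨ u = x.rev) :
    u ≠ a ∧ u.rev ≠ a ∧ u ≠ a.rev ∧ u.rev ≠ a.rev := by
  have h1 := a.isLt
  have h2 := x.isLt
  have hax' : (a : ℕ) ≠ (x : ℕ) := fun h => hax (Fin.ext h)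
  rcases hu with rfl | rfl <;>
    simp only [Ne, Fin.ext_iff, Fin.val_rev] <;>
    refine ⟨by omega, by omega, by omega, by omega⟩

theorem self_ne_rev {x : Fin n} (hx1 : 1 ≤ (x : ℕ)) (hx2 : (x : ℕ) ≤ n / 2 - 1) :
    x ≠ x.rev := by
  have h1 := x.isLt
  simp only [Ne, Fin.ext_iff, Fin.val_rev]
  omega

theorem gadget_fix {a b x y : Fin n} (f : Bool × Bool → Bool)
    (hIa : Interior n a b) (hIx : Interior n x y) (hne : (a, b) ≠ (x, y))
    {q : RPos n} (hq : q ∈ cluster n x y) :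
    (gadget n a b f)⁻¹ q = q := by
  obtain ⟨ha1, ha2, hb1, hb2⟩ := hIa
  obtain ⟨hx1, hx2, hy1, hy2⟩ := hIx
  have haa : a ≠ a.rev := self_ne_rev ha1 ha2
  have key : (∀ i : Fin n, (i = b ∨ i = b.rev) → q.2.1 ≠ i ∧ q.2.1.rev ≠ i) ∨
      (∀ j : Fin n, (j = a ∨ j = a.rev) → q.1 ≠ j ∧ q.1.rev ≠ j) := by
    rcases eq_or_ne a x with rfl | hax
    · have hby : b ≠ y := by
        rintro rfl; exact hne rfl
      left
      intro i hi
      have h := avoid hb1 hb2 hy1 hy2 hby hq.2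
      rcases hi with rfl | rfl
      · exact ⟨h.1, h.2.1⟩
      · exact ⟨h.2.2.1, h.2.2.2⟩
    · right
      intro j hj
      have h := avoid ha1 ha2 hx1 hx2 hax hq.1
      rcases hj with rfl | rfl
      · exact ⟨h.1, h.2.1⟩
      · exact ⟨h.2.2.1, h.2.2.2⟩
  unfold gadget
  split_ifs
  · simp
  · rcases key with k | k
    · exact fix4a _ _ _ (Or.inl (k b (Or.inl rfl)))
    · exact fix4a _ _ _ (Or.inr (k a.rev (Or.inr rfl)))
  · rcases key with k | k
    · exact fix4b _ _ _ (Or.inl (k b.rev (Or.inr rfl)))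
    · exact fix4b _ _ _ (Or.inr (k a (Or.inl rfl)))
  · rcases key with k | k
    · exact fix4b _ _ _ (Or.inl (k b (Or.inl rfl)))
    · exact fix4b _ _ _ (Or.inr (k a (Or.inl rfl)))
  · rcases key with k | k
    · exact fix4a _ _ _ (Or.inl (k b (Or.inl rfl)))
    · exact fix4a _ _ _ (Or.inr (k a (Or.inl rfl)))
  · rcases key with k | k
    · exact fix6 _ _ _ haa _ (Or.inl (k b (Or.inl rfl)))
    · refine fix6 _ _ _ haa _ (Or.inr ?_)
      obtain ⟨k1, k2⟩ := k a (Or.inl rfl)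
      obtain ⟨k3, k4⟩ := k a.rev (Or.inr rfl)
      exact ⟨k1, k2, k3, k4⟩

theorem gadget_config (x y : Fin n) (hx : x ≠ x.rev) (hy : y ≠ y.rev)
    (f : Bool × Bool → Bool) (hf : StandardPattern f) (ε δ : Bool) :
    solvedColoring n
      ((gadget n x y f)⁻¹ (if ε then x.rev else x, if δ then y.rev else y, true)) = f (ε, δ) := by
  have hx' : x.rev ≠ x := hx.symm
  have hy' : y.rev ≠ y := hy.symm
  rcases hf with hf | hf
  · have e1 : f (false, true) = f (false, false) := hf false true false
    have e2 : f (true, true) = f (true, false) := hf true true false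
    cases h0 : f (false, false) <;> cases h1 : f (true, false) <;>
      simp only [gadget, h0, h1, e1.trans h0, e2.trans h1, if_true, if_false,
        Bool.false_eq_true, Bool.true_eq_false, if_pos rfl, if_neg (Bool.false_ne_true)] <;>
      cases ε <;> cases δ <;>
      simp [mul_inv_rev, rowMove_inv, colMove_inv, Equiv.Perm.mul_apply,
        rowMove_apply, colMove_apply, solvedColoring, hx, hx', hy, hy', Fin.rev_rev,
        h0, h1, e1, e2]
  · have e1 : f (true, false) = f (false, false) := hf true false false
    have e2 : f (true, true) = f (false, true) := hf true false true
    cases h0 : f (false, false) <;> cases h1 : f (false, true) <;>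
      simp only [gadget, h0, h1, e1.trans h0, e2.trans h1, if_true, if_false,
        Bool.false_eq_true, Bool.true_eq_false, if_pos rfl, if_neg (Bool.false_ne_true)] <;>
      cases ε <;> cases δ <;>
      simp [mul_inv_rev, rowMove_inv, colMove_inv, Equiv.Perm.mul_apply,
        rowMove_apply, colMove_apply, solvedColoring, hx, hx', hy, hy', Fin.rev_rev,
        h0, h1, e1, e2]

theorem listfix (L : List (Equiv.Perm (RPos n))) (S : Set (RPos n))
    (h : ∀ g ∈ L, ∀ q ∈ S, g⁻¹ q = q) : ∀ q ∈ S, (L.prod)⁻¹ q = q := by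
  induction L with
  | nil => intro q _; simp
  | cons a L ih =>
    intro q hq
    rw [List.prod_cons, mul_inv_rev, Equiv.Perm.mul_apply,
      h a (List.mem_cons_self) q hq]
    exact ih (fun g hg => h g (List.mem_cons_of_mem a hg)) q hq

instance (f : Bool × Bool → Bool) : Decidable (StandardPattern f) := by
  unfold StandardPattern; infer_instance

def pat6 : Fin 6 → (Bool × Bool → Bool) := ![fun _ => true, fun _ => false,
  fun q => q.1, fun q => !q.1, fun q => q.2, fun q => !q.2]

theorem pat6_sp : ∀ i, StandardPattern (pat6 i) := by decide

theorem pat6_inj : Function.Injective pat6 := by decide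

end NxN


/-- **Realizability of arbitrary interior cluster configurations.**
For every `n ≥ 2`, any assignment of one of the six standard patterns to each
interior cluster is realized by some `g ∈ G(n)`; consequently there are at
least `6^((⌊n/2⌋−1)²)` distinct reachable colorings. -/
theorem nxnx1_cluster_realizability (n : ℕ) (hn : 2 ≤ n) :
    (∀ A : Fin n → Fin n → Bool × Bool → Bool,
      (∀ x y, Interior n x y → StandardPattern (A x y)) →
      ∃ g ∈ RGroup n, ∀ x y, Interior n x y →
        clusterConfig n (solvedColoring n ∘ ⇑g⁻¹) x y = A x y) ∧
    6 ^ ((n / 2 - 1) ^ 2) ≤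
      Set.ncard {c : RPos n → Bool | ∃ g ∈ RGroup n, c = solvedColoring n ∘ ⇑g⁻¹} := by
  classical
  have part1 : ∀ A : Fin n → Fin n → Bool × Bool → Bool,
      (∀ x y, Interior n x y → StandardPattern (A x y)) →
      ∃ g ∈ RGroup n, ∀ x y, Interior n x y →
        clusterConfig n (solvedColoring n ∘ ⇑g⁻¹) x y = A x y := by
    intro A hA
    set F : Fin n × Fin n → Equiv.Perm (RPos n) := fun p =>
      if Interior n p.1 p.2 then NxN.gadget n p.1 p.2 (A p.1 p.2) else 1 with hF
    set L := (Finset.univ : Finset (Fin n × Fin n)).toList with hL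
    refine ⟨(L.map F).prod, ?_, ?_⟩
    · refine Subgroup.list_prod_mem _ ?_
      intro g hg
      rw [List.mem_map] at hg
      obtain ⟨p, -, rfl⟩ := hg
      by_cases h : Interior n p.1 p.2
      · rw [hF]; simp only [h, if_true]; exact NxN.gadget_mem _ _ _
      · rw [hF]; simp only [h, if_false]; exact one_mem _
    · intro x y hI
      obtain ⟨hx1, hx2, hy1, hy2⟩ := id hI
      funext q
      obtain ⟨ε, δ⟩ := q
      simp only [clusterConfig, Function.comp_apply]
      have hp : ((if ε then x.rev else x, if δ then y.rev else y, true) : RPos n)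
          ∈ cluster n x y := by
        constructor
        · cases ε
          · exact Or.inl rfl
          · exact Or.inr rfl
        · cases δ
          · exact Or.inl rfl
          · exact Or.inr rfl
      have hmem : (x, y) ∈ L := by rw [hL]; exact Finset.mem_toList.mpr (Finset.mem_univ _)
      obtain ⟨s, t, hst⟩ := List.append_of_mem hmem
      have hnd : (s ++ (x, y) :: t).Nodup := hst ▸ Finset.nodup_toList _
      have hns : (x, y) ∉ s := fun hmem' =>
        List.disjoint_of_nodup_append hnd hmem' (List.mem_cons_self)
      have hnt : (x, y) ∉ t := (List.nodup_cons.mp (List.nodup_append.mp hnd).2.1).1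
      have fixlemma : ∀ l : List (Fin n × Fin n), (x, y) ∉ l →
          ∀ q' ∈ cluster n x y, ((l.map F).prod)⁻¹ q' = q' := by
        intro l hl
        refine NxN.listfix _ _ ?_
        intro g hg q' hq'
        rw [List.mem_map] at hg
        obtain ⟨pr, hpr, rfl⟩ := hg
        by_cases h : Interior n pr.1 pr.2
        · have hFe : F pr = NxN.gadget n pr.1 pr.2 (A pr.1 pr.2) := by
            rw [hF]; simp only [h, if_true]
          rw [hFe]
          refine NxN.gadget_fix _ h hI ?_ hq'
          intro hcontr
          have hpe : pr = (x, y) := by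
            rw [← hcontr]
          exact hl (hpe ▸ hpr)
        · have hFe : F pr = 1 := by rw [hF]; simp only [h, if_false]
          rw [hFe]; simp
      rw [hst, List.map_append, List.map_cons, List.prod_append, List.prod_cons]
      simp only [mul_inv_rev, Equiv.Perm.mul_apply]
      rw [fixlemma s hns _ hp]
      have hFxy : F (x, y) = NxN.gadget n x y (A x y) := by
        rw [hF]; simp only [hI, if_true]
      rw [hFxy]
      rw [fixlemma t hnt _ (NxN.gadget_cluster x y _ hp)]
      exact NxN.gadget_config x y (NxN.self_ne_rev hx1 hx2) (NxN.self_ne_rev hy1 hy2)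
        _ (hA x y hI) ε δ
  refine ⟨part1, ?_⟩
  set k := n / 2 - 1 with hk
  set S : Set (RPos n → Bool) :=
    {c : RPos n → Bool | ∃ g ∈ RGroup n, c = solvedColoring n ∘ ⇑g⁻¹} with hSdef
  have pat_sp := NxN.pat6_sp
  have pat_inj := NxN.pat6_inj
  have key : ∀ d : Fin k × Fin k → Fin 6, ∃ c, c ∈ S ∧
      ∀ i j : Fin k, clusterConfig n c
        ⟨(i : ℕ) + 1, by have := i.isLt; omega⟩
        ⟨(j : ℕ) + 1, by have := j.isLt; omega⟩ = NxN.pat6 (d (i, j)) := by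
    intro d
    set A : Fin n → Fin n → Bool × Bool → Bool := fun x y =>
      if h : Interior n x y then
        NxN.pat6 (d (⟨(x : ℕ) - 1, by obtain ⟨a1, a2, b1, b2⟩ := h; omega⟩,
                ⟨(y : ℕ) - 1, by obtain ⟨a1, a2, b1, b2⟩ := h; omega⟩))
      else fun _ => true with hAdef
    have hAs : ∀ x y, Interior n x y → StandardPattern (A x y) := by
      intro x y h
      rw [hAdef]
      simp only [h, dif_pos]
      exact pat_sp _
    obtain ⟨g, hg, hcfg⟩ := part1 A hAs
    refine ⟨solvedColoring n ∘ ⇑g⁻¹, ⟨g, hg, rfl⟩, ?_⟩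
    intro i j
    have hi := i.isLt
    have hj := j.isLt
    have hint : Interior n ⟨(i : ℕ) + 1, by omega⟩ ⟨(j : ℕ) + 1, by omega⟩ :=
      ⟨Nat.succ_le_succ (Nat.zero_le _), show (i : ℕ) + 1 ≤ n / 2 - 1 by omega,
       Nat.succ_le_succ (Nat.zero_le _), show (j : ℕ) + 1 ≤ n / 2 - 1 by omega⟩
    rw [hcfg _ _ hint]
    simp only [hAdef]
    rw [dif_pos hint]
    congr 2
  choose c hc using key
  have hinj : Function.Injective fun d => (⟨c d, (hc d).1⟩ : S) := by
    intro d1 d2 he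
    have hce : c d1 = c d2 := congrArg Subtype.val he
    funext p
    obtain ⟨i, j⟩ := p
    apply pat_inj
    rw [← (hc d1).2 i j, ← (hc d2).2 i j, hce]
  calc (6 : ℕ) ^ (k ^ 2)
      = Nat.card (Fin k × Fin k → Fin 6) := by
        simp [Nat.card_eq_fintype_card, Fintype.card_fun, pow_two]
    _ ≤ Nat.card S := Nat.card_le_card_of_injective _ hinj
    _ = S.ncard := Nat.card_coe_set_eq S
end

section
/- Classification of reachable cluster configurations: for every n ≥ 2, every g ∈ G(n), and every interior index pair (x, y), the configuration of cluster (x, y) under the coloring c₀ ∘ g⁻¹ is one of the six standard patterns, i.e., it is a function Bool × Bool → Bool whose value is independent of δ or independent of ε. -/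
set_option maxRecDepth 1000000
set_option maxHeartbeats 4000000

section ClusterAux

def HlistN : List (List ℕ) :=
  [[0, 1, 2, 3, 4, 5, 6, 7],
   [0, 1, 2, 3, 7, 6, 5, 4],
   [0, 1, 4, 5, 2, 3, 6, 7],
   [0, 1, 4, 5, 7, 6, 3, 2],
   [0, 1, 7, 6, 2, 3, 5, 4],
   [0, 1, 7, 6, 4, 5, 3, 2],
   [3, 2, 1, 0, 4, 5, 6, 7],
   [3, 2, 1, 0, 7, 6, 5, 4],
   [3, 2, 4, 5, 1, 0, 6, 7],
   [3, 2, 4, 5, 7, 6, 0, 1],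
   [3, 2, 7, 6, 1, 0, 5, 4],
   [3, 2, 7, 6, 4, 5, 0, 1],
   [5, 4, 1, 0, 2, 3, 6, 7],
   [5, 4, 1, 0, 7, 6, 3, 2],
   [5, 4, 2, 3, 1, 0, 6, 7],
   [5, 4, 2, 3, 7, 6, 0, 1],
   [5, 4, 7, 6, 1, 0, 3, 2],
   [5, 4, 7, 6, 2, 3, 0, 1],
   [6, 7, 1, 0, 2, 3, 5, 4],
   [6, 7, 1, 0, 4, 5, 3, 2],
   [6, 7, 2, 3, 1, 0, 5, 4],
   [6, 7, 2, 3, 4, 5, 0, 1],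
   [6, 7, 4, 5, 1, 0, 3, 2],
   [6, 7, 4, 5, 2, 3, 0, 1]]


/-- Code of a cluster point. -/
def codeP : Bool × Bool × Bool → ℕ :=
  fun p => (cond p.1 4 0) + (cond p.2.1 2 0) + (cond p.2.2 1 0)

/-- Decode a cluster point. -/
def decodeP : ℕ → Bool × Bool × Bool :=
  fun k => (decide (k / 4 % 2 = 1), decide (k / 2 % 2 = 1), decide (k % 2 = 1))

/-- Apply an encoded permutation. -/
def applyL (l : List ℕ) (p : Bool × Bool × Bool) : Bool × Bool × Bool :=
  decodeP (l.getD (codeP p) 0)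

/-- Embedding of the abstract cluster `Bool × Bool × Bool` into positions. -/
def embedP (n : ℕ) (x y : Fin n) : Bool × Bool × Bool → RPos n :=
  fun p => (if p.1 then x.rev else x, if p.2.1 then y.rev else y, p.2.2)

lemma hlistN_id : ∃ l ∈ HlistN, ∀ p, applyL l p = p := by decide

lemma hlistN_comp_mem : ∀ l₁ ∈ HlistN, ∀ l₂ ∈ HlistN,
    (l₂.map fun k => l₁.getD k 0) ∈ HlistN := by decide

lemma hlistN_wf : ∀ l ∈ HlistN, l.length = 8 ∧ ∀ k ∈ l, codeP (decodeP k) = k := by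
  decide

lemma codeP_lt (p : Bool × Bool × Bool) : codeP p < 8 := by
  rcases p with ⟨⟨_⟩, ⟨_⟩, ⟨_⟩⟩ <;> decide

lemma applyL_comp (l₁ l₂ : List ℕ) (h₂ : l₂ ∈ HlistN) (p : Bool × Bool × Bool) :
    applyL (l₂.map fun k => l₁.getD k 0) p = applyL l₁ (applyL l₂ p) := by
  obtain ⟨hlen, hmem⟩ := hlistN_wf l₂ h₂
  have hlt : codeP p < l₂.length := by rw [hlen]; exact codeP_lt p
  have hlt' : codeP p < (l₂.map fun k => l₁.getD k 0).length := by simpa using hlt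
  unfold applyL
  rw [List.getD_eq_getElem _ _ hlt', List.getElem_map,
    List.getD_eq_getElem _ _ hlt, hmem _ (List.getElem_mem hlt)]

lemma hlistN_inv : ∀ l ∈ HlistN, ∃ l' ∈ HlistN,
    ∀ p, applyL l (applyL l' p) = p := by decide

lemma hlistN_top : ∀ l ∈ HlistN,
    (∀ ε δ δ' : Bool, (applyL l (ε, δ, true)).2.2 = (applyL l (ε, δ', true)).2.2) ∨
    (∀ ε ε' δ : Bool, (applyL l (ε, δ, true)).2.2 = (applyL l (ε', δ, true)).2.2) := by
  decide

lemma hlistN_g0 : ∃ l ∈ HlistN, ∀ p : Bool × Bool × Bool,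
    applyL l p = if p.2.1 then p else (!p.1, p.2.1, !p.2.2) := by decide

lemma hlistN_g1 : ∃ l ∈ HlistN, ∀ p : Bool × Bool × Bool,
    applyL l p = if p.2.1 then (!p.1, p.2.1, !p.2.2) else p := by decide

lemma hlistN_g2 : ∃ l ∈ HlistN, ∀ p : Bool × Bool × Bool,
    applyL l p = if p.1 then p else (p.1, !p.2.1, !p.2.2) := by decide

lemma hlistN_g3 : ∃ l ∈ HlistN, ∀ p : Bool × Bool × Bool,
    applyL l p = if p.1 then (p.1, !p.2.1, !p.2.2) else p := by decide

end ClusterAux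

/-- **Classification of reachable cluster configurations.**
For every `n ≥ 2`, every `g ∈ G(n)`, and every interior index pair `(x, y)`,
the configuration of cluster `(x, y)` under the coloring `c₀ ∘ g⁻¹` is one of
the six standard patterns. -/
theorem nxnx1_cluster_classification (n : ℕ) (hn : 2 ≤ n)
    (g : Equiv.Perm (RPos n)) (hg : g ∈ RGroup n)
    (x y : Fin n) (hxy : Interior n x y) :
    StandardPattern (clusterConfig n (solvedColoring n ∘ ⇑g⁻¹) x y) := by
  obtain ⟨hx1, hx2, hy1, hy2⟩ := hxy
  have hxr : x.rev ≠ x := by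
    intro h
    have := congrArg Fin.val h
    rw [Fin.val_rev] at this
    omega
  have hyr : y.rev ≠ y := by
    intro h
    have := congrArg Fin.val h
    rw [Fin.val_rev] at this
    omega
  have key : ∃ l ∈ HlistN, ∀ p, g (embedP n x y p) = embedP n x y (applyL l p) := by
    induction hg using Subgroup.closure_induction with
    | one =>
      obtain ⟨l, hl, hid⟩ := hlistN_id
      exact ⟨l, hl, fun p => by rw [hid]; rfl⟩
    | mul a b ha hb iha ihb =>
      obtain ⟨l₁, h₁, e₁⟩ := iha
      obtain ⟨l₂, h₂, e₂⟩ := ihb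
      refine ⟨l₂.map fun k => l₁.getD k 0, hlistN_comp_mem l₁ h₁ l₂ h₂, fun p => ?_⟩
      rw [Equiv.Perm.mul_apply, e₂, e₁, applyL_comp l₁ l₂ h₂]
    | inv a ha ih =>
      obtain ⟨l, hl, e⟩ := ih
      obtain ⟨l', hl', hinv⟩ := hlistN_inv l hl
      refine ⟨l', hl', fun p => ?_⟩
      have h1 : embedP n x y p = a (embedP n x y (applyL l' p)) := by
        rw [e, hinv]
      rw [h1, ← Equiv.Perm.mul_apply, inv_mul_cancel, Equiv.Perm.one_apply]
    | mem m hm =>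
      have hy2' : y ≠ y.rev := fun h => hyr h.symm
      have hx2' : x ≠ x.rev := fun h => hxr h.symm
      rcases hm with ⟨i, rfl⟩ | ⟨j, rfl⟩
      · by_cases h1 : i = y
        · subst h1
          obtain ⟨l, hl, e⟩ := hlistN_g0
          refine ⟨l, hl, ?_⟩
          rintro ⟨ε, δ, b⟩
          rw [e]
          cases δ <;> cases ε <;>
            simp [rowMove, rowMoveFun, embedP, hyr, Fin.rev_rev]
        · by_cases h2 : i = y.rev
          · subst h2
            obtain ⟨l, hl, e⟩ := hlistN_g1
            refine ⟨l, hl, ?_⟩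
            rintro ⟨ε, δ, b⟩
            rw [e]
            cases δ <;> cases ε <;>
              simp [rowMove, rowMoveFun, embedP, hy2', Fin.rev_rev]
          · have hne1 : y ≠ i := fun h => h1 h.symm
            have hne2 : y.rev ≠ i := fun h => h2 h.symm
            obtain ⟨l, hl, hid⟩ := hlistN_id
            refine ⟨l, hl, ?_⟩
            rintro ⟨ε, δ, b⟩
            rw [hid]
            cases δ <;> simp [rowMove, rowMoveFun, embedP, hne1, hne2]
      · by_cases h1 : j = x
        · subst h1
          obtain ⟨l, hl, e⟩ := hlistN_g2
          refine ⟨l, hl, ?_⟩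
          rintro ⟨ε, δ, b⟩
          rw [e]
          cases ε <;> cases δ <;>
            simp [colMove, colMoveFun, embedP, hxr, Fin.rev_rev]
        · by_cases h2 : j = x.rev
          · subst h2
            obtain ⟨l, hl, e⟩ := hlistN_g3
            refine ⟨l, hl, ?_⟩
            rintro ⟨ε, δ, b⟩
            rw [e]
            cases ε <;> cases δ <;>
              simp [colMove, colMoveFun, embedP, hx2', Fin.rev_rev]
          · have hne1 : x ≠ j := fun h => h1 h.symm
            have hne2 : x.rev ≠ j := fun h => h2 h.symm
            obtain ⟨l, hl, hid⟩ := hlistN_id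
            refine ⟨l, hl, ?_⟩
            rintro ⟨ε, δ, b⟩
            rw [hid]
            cases ε <;> simp [colMove, colMoveFun, embedP, hne1, hne2]
  obtain ⟨l, hl, e⟩ := key
  obtain ⟨l', hl', hinv⟩ := hlistN_inv l hl
  have einv : ∀ p, g⁻¹ (embedP n x y p) = embedP n x y (applyL l' p) := by
    intro p
    have h1 : embedP n x y p = g (embedP n x y (applyL l' p)) := by
      rw [e, hinv]
    rw [h1, ← Equiv.Perm.mul_apply, inv_mul_cancel, Equiv.Perm.one_apply]
  have conf : ∀ ε δ : Bool,
      clusterConfig n (solvedColoring n ∘ ⇑g⁻¹) x y (ε, δ) =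
        (applyL l' (ε, δ, true)).2.2 := by
    intro ε δ
    show solvedColoring n (g⁻¹ (embedP n x y (ε, δ, true))) = _
    rw [einv]
    rfl
  rcases hlistN_top l' hl' with h | h
  · exact Or.inl fun ε δ δ' => by rw [conf, conf]; exact h ε δ δ'
  · exact Or.inr fun ε ε' δ => by rw [conf, conf]; exact h ε ε' δ
end

section
/- Cluster invariance for the n×n×1 cube: for every n, every g ∈ G(n), and every position (x, y, b) ∈ P(n), the image g(x, y, b) has first coordinate in {x, n−1−x} and second coordinate in {y, n−1−y}; that is, no sequence of legal moves can move a cubie out of the set of at most four board positions {(x, y), (x, n−1−y), (n−1−x, y), (n−1−x, n−1−y)}. -/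
/-- **Cluster invariance for the `n × n × 1` cube.**
No sequence of legal moves can move a cubie out of its cluster: for every
`g ∈ G(n)` and position `(x, y, b)`, the image `g (x, y, b)` has first
coordinate in `{x, n−1−x}` and second coordinate in `{y, n−1−y}`. -/
theorem nxnx1_cluster_invariance (n : ℕ)
    (g : Equiv.Perm (RPos n)) (hg : g ∈ RGroup n) (p : RPos n) :
    ((g p).1 = p.1 ∨ (g p).1 = p.1.rev) ∧
    ((g p).2.1 = p.2.1 ∨ (g p).2.1 = p.2.1.rev) := by
  revert p
  refine Subgroup.closure_induction ?_ ?_ ?_ ?_ hg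
  · rintro x (⟨i, rfl⟩ | ⟨j, rfl⟩) ⟨a, b, c⟩ <;>
      simp only [rowMove, colMove, Function.Involutive.coe_toPerm, rowMoveFun, colMoveFun] <;>
      split <;> simp
  · intro p; simp
  · intro g h _ _ hg hh p
    have h1 := hh p
    have h2 := hg (h p)
    simp only [Equiv.Perm.mul_apply]
    constructor
    · rcases h1.1 with e | e <;> rcases h2.1 with e' | e' <;>
        simp_all [Fin.rev_rev]
    · rcases h1.2 with e | e <;> rcases h2.2 with e' | e' <;>
        simp_all [Fin.rev_rev]
  · intro g _ hg p
    have h := hg (g⁻¹ p)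
    simp only [← Equiv.Perm.mul_apply, mul_inv_cancel, Equiv.Perm.one_apply] at h
    constructor
    · rcases h.1 with e | e
      · exact Or.inl e.symm
      · exact Or.inr (by rw [e, Fin.rev_rev])
    · rcases h.2 with e | e
      · exact Or.inl e.symm
      · exact Or.inr (by rw [e, Fin.rev_rev])
end

section
/- Constant-length local solution of a single cluster: for every n ≥ 2, every g ∈ G(n), and every interior index pair (x, y), there exist k ≤ 6 and moves m₁, …, m_k, each belonging to {ρ_y, ρ_{n−1−y}, σ_x, σ_{n−1−x}}, such that the product h = m_k ⋯ m₁ fixes every position of P(n) outside Cl(x, y), and the coloring c₀ ∘ (h g)⁻¹ agrees with c₀ on Cl(x, y) (the cluster is solved without affecting any cubie outside it). -/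
/-! ### Auxiliary machinery for the local cluster solution -/

section ClusterAux

/-- Abstract state of a cluster: top-sticker colors of its four cubies. -/
abbrev CState := Bool × Bool → Bool

/-- Abstract action of the four local moves on a cluster state. -/
def cstep (a : Fin 4) (t : CState) : CState := fun q =>
  if a.val = 0 then (if q.2 then t q else !t (!q.1, false))
  else if a.val = 1 then (if q.2 then !t (!q.1, true) else t q)
  else if a.val = 2 then (if q.1 then t q else !t (false, !q.2))
  else (if q.1 then !t (true, !q.2) else t q)

lemma cstep_zero (t : CState) (q) : cstep 0 t q = if q.2 then t q else !t (!q.1, false) := rfl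
lemma cstep_one (t : CState) (q) : cstep 1 t q = if q.2 then !t (!q.1, true) else t q := rfl
lemma cstep_two (t : CState) (q) : cstep 2 t q = if q.1 then t q else !t (false, !q.2) := rfl
lemma cstep_three (t : CState) (q) : cstep 3 t q = if q.1 then !t (true, !q.2) else t q := rfl

/-- Applying a word of abstract moves (head applied last). -/
def applyWord : List (Fin 4) → CState → CState
  | [], t => t
  | a :: r, t => cstep a (applyWord r t)

/-- Explicit solving word for each standard pattern. -/
def solver (t : CState) : List (Fin 4) :=
  match t (false, false), t (true, false), t (false, true), t (true, true) with
  | true, true, true, true => []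
  | false, false, false, false => [2,1,0,2,1,0]
  | false, false, true, true => [2,0,2,0]
  | false, true, false, true => [0,2,0,2]
  | true, false, true, false => [0,3,0,3]
  | true, true, false, false => [2,1,2,1]
  | _, _, _, _ => []

instance : DecidablePred StandardPattern := fun t => by
  unfold StandardPattern; infer_instance

lemma solver_length : ∀ t : CState, (solver t).length ≤ 6 := by decide
lemma solver_count : ∀ (t : CState) (a : Fin 4), Even ((solver t).count a) := by decide
lemma solver_solves : ∀ t : CState, StandardPattern t →
    ∀ q, applyWord (solver t) t q = true := by decide
lemma cstep_std : ∀ (a : Fin 4) (t : CState),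
    StandardPattern t → StandardPattern (cstep a t) := by decide

variable {n : ℕ}

lemma rowMove_apply (n : ℕ) (i : Fin n) (p : RPos n) :
    rowMove n i p = if p.2.1 = i then (p.1.rev, p.2.1, !p.2.2) else p := rfl
lemma colMove_apply (n : ℕ) (j : Fin n) (p : RPos n) :
    colMove n j p = if p.1 = j then (p.1, p.2.1.rev, !p.2.2) else p := rfl
lemma rowMove_inv (n : ℕ) (i : Fin n) : (rowMove n i)⁻¹ = rowMove n i := rfl
lemma colMove_inv (n : ℕ) (j : Fin n) : (colMove n j)⁻¹ = colMove n j := rfl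

lemma rmoves_inv_mem {m : Equiv.Perm (RPos n)} (h : m ∈ RMoves n) : m⁻¹ = m := by
  rcases h with ⟨i, rfl⟩ | ⟨j, rfl⟩
  · exact rowMove_inv n i
  · exact colMove_inv n j

/-- Opposite-sticker invariant. -/
abbrev OppInv (n : ℕ) (c : RPos n → Bool) : Prop :=
  ∀ a b : Fin n, c (a, b, true) = !c (a, b, false)

lemma oppInv_solved (n : ℕ) : OppInv n (solvedColoring n) := fun _ _ => rfl

lemma oppInv_row {c : RPos n → Bool} (h : OppInv n c) (i : Fin n) :
    OppInv n (c ∘ ⇑(rowMove n i)) := by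
  intro a b
  by_cases hb : b = i <;>
    simp [Function.comp, rowMove_apply, hb, h]

lemma oppInv_col {c : RPos n → Bool} (h : OppInv n c) (j : Fin n) :
    OppInv n (c ∘ ⇑(colMove n j)) := by
  intro a b
  by_cases ha : a = j <;>
    simp [Function.comp, colMove_apply, ha, h]

lemma oppInv_move {c : RPos n → Bool} (h : OppInv n c)
    {m : Equiv.Perm (RPos n)} (hm : m ∈ RMoves n) : OppInv n (c ∘ ⇑m) := by
  rcases hm with ⟨i, rfl⟩ | ⟨j, rfl⟩
  · exact oppInv_row h i
  · exact oppInv_col h j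

variable {x y : Fin n}

lemma rev_eq_iff {a b : Fin n} : a.rev = b ↔ a = b.rev := by
  constructor <;> (rintro rfl; simp [Fin.rev_rev])

section CC
variable (c : RPos n → Bool)

lemma cc_row_other (i : Fin n) (h1 : y ≠ i) (h2 : y.rev ≠ i) :
    clusterConfig n (c ∘ ⇑(rowMove n i)) x y = clusterConfig n c x y := by
  funext q
  rcases q with ⟨e, d⟩
  cases d <;> simp [clusterConfig, Function.comp, rowMove_apply, h1, h2]

lemma cc_col_other (j : Fin n) (h1 : x ≠ j) (h2 : x.rev ≠ j) :
    clusterConfig n (c ∘ ⇑(colMove n j)) x y = clusterConfig n c x y := by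
  funext q
  rcases q with ⟨e, d⟩
  cases e <;> simp [clusterConfig, Function.comp, colMove_apply, h1, h2]

lemma cc_row_y (hc : OppInv n c) (hyy : y.rev ≠ y) :
    clusterConfig n (c ∘ ⇑(rowMove n y)) x y = cstep 0 (clusterConfig n c x y) := by
  funext q
  rcases q with ⟨e, d⟩
  cases d
  · cases e <;>
      simp [clusterConfig, Function.comp, rowMove_apply, cstep_zero, Fin.rev_rev, hc]
  · simp [clusterConfig, Function.comp, rowMove_apply, cstep_zero, hyy]

lemma cc_row_yrev (hc : OppInv n c) (hyy : y.rev ≠ y) :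
    clusterConfig n (c ∘ ⇑(rowMove n y.rev)) x y = cstep 1 (clusterConfig n c x y) := by
  have hyy' : y ≠ y.rev := fun h => hyy h.symm
  funext q
  rcases q with ⟨e, d⟩
  cases d
  · simp [clusterConfig, Function.comp, rowMove_apply, cstep_one, hyy']
  · cases e <;>
      simp [clusterConfig, Function.comp, rowMove_apply, cstep_one, Fin.rev_rev, hc]

lemma cc_col_x (hc : OppInv n c) (hxx : x.rev ≠ x) :
    clusterConfig n (c ∘ ⇑(colMove n x)) x y = cstep 2 (clusterConfig n c x y) := by
  funext q
  rcases q with ⟨e, d⟩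
  cases e
  · cases d <;>
      simp [clusterConfig, Function.comp, colMove_apply, cstep_two, Fin.rev_rev, hc]
  · simp [clusterConfig, Function.comp, colMove_apply, cstep_two, hxx]

lemma cc_col_xrev (hc : OppInv n c) (hxx : x.rev ≠ x) :
    clusterConfig n (c ∘ ⇑(colMove n x.rev)) x y = cstep 3 (clusterConfig n c x y) := by
  have hxx' : x ≠ x.rev := fun h => hxx h.symm
  funext q
  rcases q with ⟨e, d⟩
  cases e
  · simp [clusterConfig, Function.comp, colMove_apply, cstep_three, hxx']
  · cases d <;>
      simp [clusterConfig, Function.comp, colMove_apply, cstep_three, Fin.rev_rev, hc]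

lemma std_move (hc : OppInv n c) (hyy : y.rev ≠ y) (hxx : x.rev ≠ x)
    {m : Equiv.Perm (RPos n)} (hm : m ∈ RMoves n)
    (hstd : StandardPattern (clusterConfig n c x y)) :
    StandardPattern (clusterConfig n (c ∘ ⇑m) x y) := by
  rcases hm with ⟨i, rfl⟩ | ⟨j, rfl⟩
  · by_cases h1 : y = i
    · subst h1; rw [cc_row_y c hc hyy]; exact cstep_std 0 _ hstd
    · by_cases h2 : y.rev = i
      · subst h2; rw [cc_row_yrev c hc hyy]; exact cstep_std 1 _ hstd
      · rw [cc_row_other c i h1 h2]; exact hstd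
  · by_cases h1 : x = j
    · subst h1; rw [cc_col_x c hc hxx]; exact cstep_std 2 _ hstd
    · by_cases h2 : x.rev = j
      · subst h2; rw [cc_col_xrev c hc hxx]; exact cstep_std 3 _ hstd
      · rw [cc_col_other c j h1 h2]; exact hstd

end CC

/-- The invariant holds for every coloring reached from the solved one. -/
lemma group_invariant (hyy : y.rev ≠ y) (hxx : x.rev ≠ x)
    {g : Equiv.Perm (RPos n)} (hg : g ∈ RGroup n) :
    OppInv n (solvedColoring n ∘ ⇑g⁻¹) ∧
      StandardPattern (clusterConfig n (solvedColoring n ∘ ⇑g⁻¹) x y) := by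
  have hg' : g ∈ Submonoid.closure (RMoves n ∪ (RMoves n)⁻¹) := by
    rw [← Subgroup.closure_toSubmonoid]; exact hg
  obtain ⟨l, hl, rfl⟩ := Submonoid.exists_list_of_mem_closure hg'
  clear hg hg'
  induction l with
  | nil =>
    constructor
    · simpa using oppInv_solved n
    · left; intro ε δ δ'; simp [clusterConfig, solvedColoring]
  | cons m r ih =>
    have hm : m ∈ RMoves n := by
      rcases hl m (List.mem_cons_self (a := m) (l := r)) with h | h
      · exact h
      · rw [Set.mem_inv] at h
        have h2 := rmoves_inv_mem h
        rw [inv_inv] at h2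
        rw [h2]; exact h
    have hr : ∀ m' ∈ r, m' ∈ RMoves n ∪ (RMoves n)⁻¹ :=
      fun m' hm' => hl m' (List.mem_cons_of_mem m hm')
    obtain ⟨ih1, ih2⟩ := ih hr
    have key : solvedColoring n ∘ ⇑(m :: r).prod⁻¹ =
        (solvedColoring n ∘ ⇑r.prod⁻¹) ∘ ⇑m := by
      rw [List.prod_cons, mul_inv_rev, rmoves_inv_mem hm]
      rfl
    rw [key]
    exact ⟨oppInv_move ih1 hm, std_move _ ih1 hyy hxx hm ih2⟩

/-- The four local moves of cluster `(x,y)`. -/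
def Mv (n : ℕ) (x y : Fin n) : Fin 4 → Equiv.Perm (RPos n) := fun a =>
  if a.val = 0 then rowMove n y else if a.val = 1 then rowMove n y.rev
  else if a.val = 2 then colMove n x else colMove n x.rev

lemma Mv_zero : Mv n x y 0 = rowMove n y := rfl
lemma Mv_one : Mv n x y 1 = rowMove n y.rev := rfl
lemma Mv_two : Mv n x y 2 = colMove n x := rfl
lemma Mv_three : Mv n x y 3 = colMove n x.rev := rfl

lemma Mv_mem_moves (a : Fin 4) : Mv n x y a ∈ RMoves n := by
  fin_cases a
  · exact Or.inl ⟨y, rfl⟩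
  · exact Or.inl ⟨y.rev, rfl⟩
  · exact Or.inr ⟨x, rfl⟩
  · exact Or.inr ⟨x.rev, rfl⟩

lemma Mv_inv (a : Fin 4) : (Mv n x y a)⁻¹ = Mv n x y a :=
  rmoves_inv_mem (Mv_mem_moves a)

lemma cc_Mv (c : RPos n → Bool) (hc : OppInv n c) (hyy : y.rev ≠ y) (hxx : x.rev ≠ x)
    (a : Fin 4) :
    clusterConfig n (c ∘ ⇑(Mv n x y a)) x y = cstep a (clusterConfig n c x y) := by
  fin_cases a
  · exact cc_row_y c hc hyy
  · exact cc_row_yrev c hc hyy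
  · exact cc_col_x c hc hxx
  · exact cc_col_xrev c hc hxx

lemma word_cc (hyy : y.rev ≠ y) (hxx : x.rev ≠ x)
    (c : RPos n → Bool) (hc : OppInv n c) :
    ∀ w : List (Fin 4),
      OppInv n (c ∘ ⇑(w.map (Mv n x y)).prod⁻¹) ∧
        clusterConfig n (c ∘ ⇑(w.map (Mv n x y)).prod⁻¹) x y =
          applyWord w (clusterConfig n c x y) := by
  intro w
  induction w with
  | nil =>
    constructor
    · simpa using hc
    · simp [applyWord]
  | cons a r ih =>
    obtain ⟨ih1, ih2⟩ := ih
    have key : c ∘ ⇑((a :: r).map (Mv n x y)).prod⁻¹ =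
        (c ∘ ⇑(r.map (Mv n x y)).prod⁻¹) ∘ ⇑(Mv n x y a) := by
      rw [List.map_cons, List.prod_cons, mul_inv_rev, Mv_inv]
      rfl
    rw [key]
    refine ⟨oppInv_move ih1 (Mv_mem_moves a), ?_⟩
    rw [cc_Mv _ ih1 hyy hxx a, ih2]
    rfl

/-- Parity lemma: a word whose relevant generator occurs evenly fixes `p`. -/
lemma prod_parity {α : Type*} (M : Fin 4 → Equiv.Perm α) (a : Fin 4) (p : α)
    (hinv : M a (M a p) = p)
    (hfix : ∀ b, b ≠ a → M b p = p ∧ M b (M a p) = M a p) :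
    ∀ w : List (Fin 4),
      (w.map M).prod p = if Even (w.count a) then p else M a p := by
  intro w
  induction w with
  | nil => simp
  | cons b r ih =>
    have hval : ((b :: r).map M).prod p = M b ((r.map M).prod p) := by
      rw [List.map_cons, List.prod_cons]; rfl
    rw [hval, ih]
    by_cases hb : b = a
    · subst hb
      rw [List.count_cons_self]
      by_cases he : Even (r.count b)
      · have ho : ¬Even (r.count b + 1) := by simp [Nat.even_add_one, he]
        simp [he, ho]
      · have ho : Even (r.count b + 1) := by simp [Nat.even_add_one, he]
        simp [he, ho, hinv]
    · rw [List.count_cons_of_ne hb]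
      by_cases he : Even (r.count a)
      · simp [he, (hfix b hb).1]
      · simp [he, (hfix b hb).2]


lemma prod_fix_outside {n : ℕ} {x y : Fin n} (hyy : y.rev ≠ y) (hxx : x.rev ≠ x)
    (w : List (Fin 4)) (hcount : ∀ a : Fin 4, Even (w.count a)) :
    ∀ p : RPos n, p ∉ cluster n x y → ((w.map (Mv n x y)).prod) p = p := by
  have hyy' : y ≠ y.rev := fun h => hyy h.symm
  have hxx' : x ≠ x.rev := fun h => hxx h.symm
  rintro ⟨u, v, s⟩ hp
  have hp' : ¬((u = x ∨ u = x.rev) ∧ (v = y ∨ v = y.rev)) := hp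
  by_cases hu : u = x ∨ u = x.rev
  · have hv : ¬(v = y ∨ v = y.rev) := fun h => hp' ⟨hu, h⟩
    push_neg at hv
    obtain ⟨hv1, hv2⟩ := hv
    have hvr1 : v.rev ≠ y := fun h => hv2 (rev_eq_iff.mp h)
    have hvr2 : v.rev ≠ y.rev := fun h => hv1 (Fin.rev_injective h)
    rcases hu with hu1 | hu1
    · -- u = x : relevant generator is `2`
      have hu2 : u ≠ x.rev := hu1 ▸ hxx'
      have hq : Mv n x y 2 (u, v, s) = (u, v.rev, !s) := by
        simp [Mv_two, colMove_apply, hu1]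
      have key := prod_parity (Mv n x y) 2 (u, v, s) ?_ ?_ w
      · rw [key, if_pos (hcount 2)]
      · rw [hq]; simp [Mv_two, colMove_apply, hu1, Fin.rev_rev]
      · intro b hb
        fin_cases b
        · exact ⟨by simp [Mv_zero, rowMove_apply, hv1],
            by rw [hq]; simp [Mv_zero, rowMove_apply, hvr1]⟩
        · exact ⟨by simp [Mv_one, rowMove_apply, hv2],
            by rw [hq]; simp [Mv_one, rowMove_apply, hvr2]⟩
        · exact absurd rfl hb
        · exact ⟨by simp [Mv_three, colMove_apply, hu2],
            by rw [hq]; simp [Mv_three, colMove_apply, hu2]⟩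
    · -- u = x.rev : relevant generator is `3`
      have hu2 : u ≠ x := hu1 ▸ hxx
      have hq : Mv n x y 3 (u, v, s) = (u, v.rev, !s) := by
        simp [Mv_three, colMove_apply, hu1]
      have key := prod_parity (Mv n x y) 3 (u, v, s) ?_ ?_ w
      · rw [key, if_pos (hcount 3)]
      · rw [hq]; simp [Mv_three, colMove_apply, hu1, Fin.rev_rev]
      · intro b hb
        fin_cases b
        · exact ⟨by simp [Mv_zero, rowMove_apply, hv1],
            by rw [hq]; simp [Mv_zero, rowMove_apply, hvr1]⟩
        · exact ⟨by simp [Mv_one, rowMove_apply, hv2],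
            by rw [hq]; simp [Mv_one, rowMove_apply, hvr2]⟩
        · exact ⟨by simp [Mv_two, colMove_apply, hu2],
            by rw [hq]; simp [Mv_two, colMove_apply, hu2]⟩
        · exact absurd rfl hb
  · push_neg at hu
    obtain ⟨hu1, hu2⟩ := hu
    have hur1 : u.rev ≠ x := fun h => hu2 (rev_eq_iff.mp h)
    have hur2 : u.rev ≠ x.rev := fun h => hu1 (Fin.rev_injective h)
    by_cases hv : v = y ∨ v = y.rev
    · rcases hv with hv1 | hv1
      · -- v = y : relevant generator is `0`
        have hv2 : v ≠ y.rev := hv1 ▸ hyy'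
        have hq : Mv n x y 0 (u, v, s) = (u.rev, v, !s) := by
          simp [Mv_zero, rowMove_apply, hv1]
        have key := prod_parity (Mv n x y) 0 (u, v, s) ?_ ?_ w
        · rw [key, if_pos (hcount 0)]
        · rw [hq]; simp [Mv_zero, rowMove_apply, hv1, Fin.rev_rev]
        · intro b hb
          fin_cases b
          · exact absurd rfl hb
          · exact ⟨by simp [Mv_one, rowMove_apply, hv2],
              by rw [hq]; simp [Mv_one, rowMove_apply, hv2]⟩
          · exact ⟨by simp [Mv_two, colMove_apply, hu1],
              by rw [hq]; simp [Mv_two, colMove_apply, hur1]⟩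
          · exact ⟨by simp [Mv_three, colMove_apply, hu2],
              by rw [hq]; simp [Mv_three, colMove_apply, hur2]⟩
      · -- v = y.rev : relevant generator is `1`
        have hv2 : v ≠ y := hv1 ▸ hyy
        have hq : Mv n x y 1 (u, v, s) = (u.rev, v, !s) := by
          simp [Mv_one, rowMove_apply, hv1]
        have key := prod_parity (Mv n x y) 1 (u, v, s) ?_ ?_ w
        · rw [key, if_pos (hcount 1)]
        · rw [hq]; simp [Mv_one, rowMove_apply, hv1, Fin.rev_rev]
        · intro b hb
          fin_cases b
          · exact ⟨by simp [Mv_zero, rowMove_apply, hv2],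
              by rw [hq]; simp [Mv_zero, rowMove_apply, hv2]⟩
          · exact absurd rfl hb
          · exact ⟨by simp [Mv_two, colMove_apply, hu1],
              by rw [hq]; simp [Mv_two, colMove_apply, hur1]⟩
          · exact ⟨by simp [Mv_three, colMove_apply, hu2],
              by rw [hq]; simp [Mv_three, colMove_apply, hur2]⟩
    · push_neg at hv
      obtain ⟨hv1, hv2⟩ := hv
      have hfix : ∀ b : Fin 4, Mv n x y b (u, v, s) = (u, v, s) := by
        intro b
        fin_cases b
        · simp [Mv_zero, rowMove_apply, hv1]
        · simp [Mv_one, rowMove_apply, hv2]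
        · simp [Mv_two, colMove_apply, hu1]
        · simp [Mv_three, colMove_apply, hu2]
      have key := prod_parity (Mv n x y) 0 (u, v, s)
        (by rw [hfix 0, hfix 0]) (fun b _ => ⟨hfix b, by rw [hfix 0]; exact hfix b⟩) w
      rw [key, hfix 0]
      simp

end ClusterAux
/-- **Constant-length local solution of a single cluster.**
For every `n ≥ 2`, `g ∈ G(n)`, and interior pair `(x, y)`, there is a sequence
of at most `6` moves, each among `ρ_y, ρ_{n−1−y}, σ_x, σ_{n−1−x}`, whose
product `h` fixes every position outside `Cl(x, y)` and for which the coloring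
`c₀ ∘ (h g)⁻¹` agrees with `c₀` on `Cl(x, y)`. -/
theorem nxnx1_local_cluster_solution (n : ℕ) (hn : 2 ≤ n)
    (g : Equiv.Perm (RPos n)) (hg : g ∈ RGroup n)
    (x y : Fin n) (hxy : Interior n x y) :
    ∃ L : List (Equiv.Perm (RPos n)),
      L.length ≤ 6 ∧
      (∀ m ∈ L, m ∈ ({rowMove n y, rowMove n y.rev, colMove n x, colMove n x.rev} :
        Set (Equiv.Perm (RPos n)))) ∧
      (∀ p : RPos n, p ∉ cluster n x y → L.prod p = p) ∧
      (∀ p ∈ cluster n x y,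
        (solvedColoring n ∘ ⇑(L.prod * g)⁻¹) p = solvedColoring n p) := by
  obtain ⟨hx1, hx2, hy1, hy2⟩ := hxy
  have hxn : (x : ℕ) < n := x.isLt
  have hyn : (y : ℕ) < n := y.isLt
  have hxx : x.rev ≠ x := by
    intro h
    have := congrArg Fin.val h
    rw [Fin.val_rev] at this
    omega
  have hyy : y.rev ≠ y := by
    intro h
    have := congrArg Fin.val h
    rw [Fin.val_rev] at this
    omega
  set c : RPos n → Bool := solvedColoring n ∘ ⇑g⁻¹ with hc_def
  obtain ⟨hcInv, hcStd⟩ := group_invariant (x := x) (y := y) hyy hxx hg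
  set t : CState := clusterConfig n c x y with ht_def
  set w : List (Fin 4) := solver t with hw_def
  refine ⟨w.map (Mv n x y), ?_, ?_, ?_, ?_⟩
  · rw [List.length_map]; exact solver_length t
  · intro m hm
    rw [List.mem_map] at hm
    obtain ⟨a, _, rfl⟩ := hm
    fin_cases a
    · exact Set.mem_insert _ _
    · exact Set.mem_insert_of_mem _ (Set.mem_insert _ _)
    · exact Set.mem_insert_of_mem _ (Set.mem_insert_of_mem _ (Set.mem_insert _ _))
    · exact Set.mem_insert_of_mem _ (Set.mem_insert_of_mem _
        (Set.mem_insert_of_mem _ rfl))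
  · exact prod_fix_outside hyy hxx w (solver_count t)
  · rintro ⟨u, v, s⟩ ⟨hu, hv⟩
    obtain ⟨hInv', hcc'⟩ := word_cc hyy hxx c hcInv w
    have hsol : ∀ q, clusterConfig n (c ∘ ⇑(w.map (Mv n x y)).prod⁻¹) x y q = true := by
      intro q
      rw [hcc']
      exact solver_solves t hcStd q
    have hcol : solvedColoring n ∘ ⇑((w.map (Mv n x y)).prod * g)⁻¹ =
        c ∘ ⇑(w.map (Mv n x y)).prod⁻¹ := by
      rw [mul_inv_rev, hc_def]
      rfl
    rw [hcol]
    have htop : (c ∘ ⇑(w.map (Mv n x y)).prod⁻¹) (u, v, true) = true := by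
      rcases hu with rfl | rfl <;> rcases hv with rfl | rfl
      · exact hsol (false, false)
      · exact hsol (false, true)
      · exact hsol (true, false)
      · exact hsol (true, true)
    have hbot : (c ∘ ⇑(w.map (Mv n x y)).prod⁻¹) (u, v, false) = false := by
      have h2 := hInv' u v
      rw [htop] at h2
      simpa using h2.symm
    cases s
    · simpa [solvedColoring] using hbot
    · simpa [solvedColoring] using htop
end

section
/- The subgroup of the permutation group of a 24-element set {1, 2, …, 24} generated by the following 24 three-cycles equals the alternating group on 24 elements: (1 2 12), (4 3 10), (2 4 11), (3 1 9), (5 12 8), (20 13 19), (12 20 24), (13 5 4), (6 11 5), (19 14 18), (11 19 22), (14 6 3), (7 10 6), (18 15 17), (10 18 21), (15 7 1), (8 9 7), (17 16 20), (9 17 23), (16 8 2), (21 22 13), (24 23 15), (22 24 16), (23 21 14). -/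
/-- The three-cycle `(a b c)`, mapping `a ↦ b`, `b ↦ c`, `c ↦ a` and fixing
everything else. -/
def threeCycle (a b c : Fin 24) : Equiv.Perm (Fin 24) :=
  Equiv.swap a c * Equiv.swap a b

/-- The 24 three-cycles of the paper, with the elements `1, …, 24` identified
with `Fin 24` via `k ↦ k − 1`. -/
def clusterGenerators : Set (Equiv.Perm (Fin 24)) :=
  { threeCycle 0 1 11,   -- (1 2 12)
    threeCycle 3 2 9,    -- (4 3 10)
    threeCycle 1 3 10,   -- (2 4 11)
    threeCycle 2 0 8,    -- (3 1 9)
    threeCycle 4 11 7,   -- (5 12 8)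
    threeCycle 19 12 18, -- (20 13 19)
    threeCycle 11 19 23, -- (12 20 24)
    threeCycle 12 4 3,   -- (13 5 4)
    threeCycle 5 10 4,   -- (6 11 5)
    threeCycle 18 13 17, -- (19 14 18)
    threeCycle 10 18 21, -- (11 19 22)
    threeCycle 13 5 2,   -- (14 6 3)
    threeCycle 6 9 5,    -- (7 10 6)
    threeCycle 17 14 16, -- (18 15 17)
    threeCycle 9 17 20,  -- (10 18 21)
    threeCycle 14 6 0,   -- (15 7 1)
    threeCycle 7 8 6,    -- (8 9 7)
    threeCycle 16 15 19, -- (17 16 20)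
    threeCycle 8 16 22,  -- (9 17 23)
    threeCycle 15 7 1,   -- (16 8 2)
    threeCycle 20 21 12, -- (21 22 13)
    threeCycle 23 22 14, -- (24 23 15)
    threeCycle 21 23 15, -- (22 24 16)
    threeCycle 22 20 13  -- (23 21 14)
  }

open Equiv Equiv.Perm Subgroup

private lemma tc_apply₁ {a b c : Fin 24} (hab : a ≠ b) (hbc : b ≠ c) :
    threeCycle a b c a = b := by
  simp only [threeCycle, Equiv.Perm.mul_apply, Equiv.swap_apply_left]
  exact Equiv.swap_apply_of_ne_of_ne hab.symm hbc

private lemma tc_apply₂ {a b c : Fin 24} : threeCycle a b c b = c := by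
  simp only [threeCycle, Equiv.Perm.mul_apply, Equiv.swap_apply_right,
    Equiv.swap_apply_left]

private lemma tc_apply₃ {a b c : Fin 24} (hac : a ≠ c) (hbc : b ≠ c) :
    threeCycle a b c c = a := by
  simp only [threeCycle, Equiv.Perm.mul_apply]
  rw [Equiv.swap_apply_of_ne_of_ne hac.symm hbc.symm, Equiv.swap_apply_right]

private lemma tc_apply₄ {a b c x : Fin 24} (hxa : x ≠ a) (hxb : x ≠ b) (hxc : x ≠ c) :
    threeCycle a b c x = x := by
  simp only [threeCycle, Equiv.Perm.mul_apply]
  rw [Equiv.swap_apply_of_ne_of_ne hxa hxb, Equiv.swap_apply_of_ne_of_ne hxa hxc]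

private lemma tc_conj (π : Equiv.Perm (Fin 24)) (a b c : Fin 24) :
    π * threeCycle a b c * π⁻¹ = threeCycle (π a) (π b) (π c) := by
  simp only [threeCycle, Equiv.swap_apply_apply]
  group

private lemma tc_inv (a b c : Fin 24) : (threeCycle a b c)⁻¹ = threeCycle a c b := by
  simp only [threeCycle, mul_inv_rev, Equiv.swap_inv]

private lemma tc_rot {a b c : Fin 24} (hab : a ≠ b) (hac : a ≠ c) (hbc : b ≠ c) :
    threeCycle a b c = threeCycle b c a := by
  apply Equiv.ext
  intro x
  by_cases hxa : x = a
  · subst hxa; rw [tc_apply₁ hab hbc, tc_apply₃ (Ne.symm hab) (Ne.symm hac)]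
  by_cases hxb : x = b
  · subst hxb; rw [tc_apply₂, tc_apply₁ hbc (Ne.symm hac)]
  by_cases hxc : x = c
  · subst hxc; rw [tc_apply₃ hac hbc, tc_apply₂]
  · rw [tc_apply₄ hxa hxb hxc, tc_apply₄ hxb hxc hxa]

private lemma tc_isThreeCycle {a b c : Fin 24} (hab : a ≠ b) (hac : a ≠ c) (hbc : b ≠ c) :
    IsThreeCycle (threeCycle a b c) :=
  isThreeCycle_swap_mul_swap_same hac hab hbc.symm

private lemma tmem : ∀ k : Fin 24, k ≠ 0 → k ≠ 1 →
    threeCycle 0 1 k ∈ Subgroup.closure clusterGenerators := by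
  have g0 : threeCycle 0 1 11 ∈ Subgroup.closure clusterGenerators :=
    Subgroup.subset_closure (Set.mem_insert _ _)
  have g1 : threeCycle 3 2 9 ∈ Subgroup.closure clusterGenerators :=
    Subgroup.subset_closure (Set.mem_insert_of_mem _ (Set.mem_insert _ _))
  have g2 : threeCycle 1 3 10 ∈ Subgroup.closure clusterGenerators :=
    Subgroup.subset_closure (Set.mem_insert_of_mem _ (Set.mem_insert_of_mem _ (Set.mem_insert _ _)))
  have g3 : threeCycle 2 0 8 ∈ Subgroup.closure clusterGenerators :=
    Subgroup.subset_closure (Set.mem_insert_of_mem _ (Set.mem_insert_of_mem _ (Set.mem_insert_of_mem _ (Set.mem_insert _ _))))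
  have g4 : threeCycle 4 11 7 ∈ Subgroup.closure clusterGenerators :=
    Subgroup.subset_closure (Set.mem_insert_of_mem _ (Set.mem_insert_of_mem _ (Set.mem_insert_of_mem _ (Set.mem_insert_of_mem _ (Set.mem_insert _ _)))))
  have g5 : threeCycle 19 12 18 ∈ Subgroup.closure clusterGenerators :=
    Subgroup.subset_closure (Set.mem_insert_of_mem _ (Set.mem_insert_of_mem _ (Set.mem_insert_of_mem _ (Set.mem_insert_of_mem _ (Set.mem_insert_of_mem _ (Set.mem_insert _ _))))))
  have g6 : threeCycle 11 19 23 ∈ Subgroup.closure clusterGenerators :=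
    Subgroup.subset_closure (Set.mem_insert_of_mem _ (Set.mem_insert_of_mem _ (Set.mem_insert_of_mem _ (Set.mem_insert_of_mem _ (Set.mem_insert_of_mem _ (Set.mem_insert_of_mem _ (Set.mem_insert _ _)))))))
  have g7 : threeCycle 12 4 3 ∈ Subgroup.closure clusterGenerators :=
    Subgroup.subset_closure (Set.mem_insert_of_mem _ (Set.mem_insert_of_mem _ (Set.mem_insert_of_mem _ (Set.mem_insert_of_mem _ (Set.mem_insert_of_mem _ (Set.mem_insert_of_mem _ (Set.mem_insert_of_mem _ (Set.mem_insert _ _))))))))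
  have g8 : threeCycle 5 10 4 ∈ Subgroup.closure clusterGenerators :=
    Subgroup.subset_closure (Set.mem_insert_of_mem _ (Set.mem_insert_of_mem _ (Set.mem_insert_of_mem _ (Set.mem_insert_of_mem _ (Set.mem_insert_of_mem _ (Set.mem_insert_of_mem _ (Set.mem_insert_of_mem _ (Set.mem_insert_of_mem _ (Set.mem_insert _ _)))))))))
  have g9 : threeCycle 18 13 17 ∈ Subgroup.closure clusterGenerators :=
    Subgroup.subset_closure (Set.mem_insert_of_mem _ (Set.mem_insert_of_mem _ (Set.mem_insert_of_mem _ (Set.mem_insert_of_mem _ (Set.mem_insert_of_mem _ (Set.mem_insert_of_mem _ (Set.mem_insert_of_mem _ (Set.mem_insert_of_mem _ (Set.mem_insert_of_mem _ (Set.mem_insert _ _))))))))))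
  have g10 : threeCycle 10 18 21 ∈ Subgroup.closure clusterGenerators :=
    Subgroup.subset_closure (Set.mem_insert_of_mem _ (Set.mem_insert_of_mem _ (Set.mem_insert_of_mem _ (Set.mem_insert_of_mem _ (Set.mem_insert_of_mem _ (Set.mem_insert_of_mem _ (Set.mem_insert_of_mem _ (Set.mem_insert_of_mem _ (Set.mem_insert_of_mem _ (Set.mem_insert_of_mem _ (Set.mem_insert _ _)))))))))))
  have g11 : threeCycle 13 5 2 ∈ Subgroup.closure clusterGenerators :=
    Subgroup.subset_closure (Set.mem_insert_of_mem _ (Set.mem_insert_of_mem _ (Set.mem_insert_of_mem _ (Set.mem_insert_of_mem _ (Set.mem_insert_of_mem _ (Set.mem_insert_of_mem _ (Set.mem_insert_of_mem _ (Set.mem_insert_of_mem _ (Set.mem_insert_of_mem _ (Set.mem_insert_of_mem _ (Set.mem_insert_of_mem _ (Set.mem_insert _ _))))))))))))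
  have g12 : threeCycle 6 9 5 ∈ Subgroup.closure clusterGenerators :=
    Subgroup.subset_closure (Set.mem_insert_of_mem _ (Set.mem_insert_of_mem _ (Set.mem_insert_of_mem _ (Set.mem_insert_of_mem _ (Set.mem_insert_of_mem _ (Set.mem_insert_of_mem _ (Set.mem_insert_of_mem _ (Set.mem_insert_of_mem _ (Set.mem_insert_of_mem _ (Set.mem_insert_of_mem _ (Set.mem_insert_of_mem _ (Set.mem_insert_of_mem _ (Set.mem_insert _ _)))))))))))))
  have g13 : threeCycle 17 14 16 ∈ Subgroup.closure clusterGenerators :=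
    Subgroup.subset_closure (Set.mem_insert_of_mem _ (Set.mem_insert_of_mem _ (Set.mem_insert_of_mem _ (Set.mem_insert_of_mem _ (Set.mem_insert_of_mem _ (Set.mem_insert_of_mem _ (Set.mem_insert_of_mem _ (Set.mem_insert_of_mem _ (Set.mem_insert_of_mem _ (Set.mem_insert_of_mem _ (Set.mem_insert_of_mem _ (Set.mem_insert_of_mem _ (Set.mem_insert_of_mem _ (Set.mem_insert _ _))))))))))))))
  have g14 : threeCycle 9 17 20 ∈ Subgroup.closure clusterGenerators :=
    Subgroup.subset_closure (Set.mem_insert_of_mem _ (Set.mem_insert_of_mem _ (Set.mem_insert_of_mem _ (Set.mem_insert_of_mem _ (Set.mem_insert_of_mem _ (Set.mem_insert_of_mem _ (Set.mem_insert_of_mem _ (Set.mem_insert_of_mem _ (Set.mem_insert_of_mem _ (Set.mem_insert_of_mem _ (Set.mem_insert_of_mem _ (Set.mem_insert_of_mem _ (Set.mem_insert_of_mem _ (Set.mem_insert_of_mem _ (Set.mem_insert _ _)))))))))))))))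
  have g15 : threeCycle 14 6 0 ∈ Subgroup.closure clusterGenerators :=
    Subgroup.subset_closure (Set.mem_insert_of_mem _ (Set.mem_insert_of_mem _ (Set.mem_insert_of_mem _ (Set.mem_insert_of_mem _ (Set.mem_insert_of_mem _ (Set.mem_insert_of_mem _ (Set.mem_insert_of_mem _ (Set.mem_insert_of_mem _ (Set.mem_insert_of_mem _ (Set.mem_insert_of_mem _ (Set.mem_insert_of_mem _ (Set.mem_insert_of_mem _ (Set.mem_insert_of_mem _ (Set.mem_insert_of_mem _ (Set.mem_insert_of_mem _ (Set.mem_insert _ _))))))))))))))))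
  have g16 : threeCycle 7 8 6 ∈ Subgroup.closure clusterGenerators :=
    Subgroup.subset_closure (Set.mem_insert_of_mem _ (Set.mem_insert_of_mem _ (Set.mem_insert_of_mem _ (Set.mem_insert_of_mem _ (Set.mem_insert_of_mem _ (Set.mem_insert_of_mem _ (Set.mem_insert_of_mem _ (Set.mem_insert_of_mem _ (Set.mem_insert_of_mem _ (Set.mem_insert_of_mem _ (Set.mem_insert_of_mem _ (Set.mem_insert_of_mem _ (Set.mem_insert_of_mem _ (Set.mem_insert_of_mem _ (Set.mem_insert_of_mem _ (Set.mem_insert_of_mem _ (Set.mem_insert _ _)))))))))))))))))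
  have g17 : threeCycle 16 15 19 ∈ Subgroup.closure clusterGenerators :=
    Subgroup.subset_closure (Set.mem_insert_of_mem _ (Set.mem_insert_of_mem _ (Set.mem_insert_of_mem _ (Set.mem_insert_of_mem _ (Set.mem_insert_of_mem _ (Set.mem_insert_of_mem _ (Set.mem_insert_of_mem _ (Set.mem_insert_of_mem _ (Set.mem_insert_of_mem _ (Set.mem_insert_of_mem _ (Set.mem_insert_of_mem _ (Set.mem_insert_of_mem _ (Set.mem_insert_of_mem _ (Set.mem_insert_of_mem _ (Set.mem_insert_of_mem _ (Set.mem_insert_of_mem _ (Set.mem_insert_of_mem _ (Set.mem_insert _ _))))))))))))))))))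
  have g18 : threeCycle 8 16 22 ∈ Subgroup.closure clusterGenerators :=
    Subgroup.subset_closure (Set.mem_insert_of_mem _ (Set.mem_insert_of_mem _ (Set.mem_insert_of_mem _ (Set.mem_insert_of_mem _ (Set.mem_insert_of_mem _ (Set.mem_insert_of_mem _ (Set.mem_insert_of_mem _ (Set.mem_insert_of_mem _ (Set.mem_insert_of_mem _ (Set.mem_insert_of_mem _ (Set.mem_insert_of_mem _ (Set.mem_insert_of_mem _ (Set.mem_insert_of_mem _ (Set.mem_insert_of_mem _ (Set.mem_insert_of_mem _ (Set.mem_insert_of_mem _ (Set.mem_insert_of_mem _ (Set.mem_insert_of_mem _ (Set.mem_insert _ _)))))))))))))))))))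
  have g19 : threeCycle 15 7 1 ∈ Subgroup.closure clusterGenerators :=
    Subgroup.subset_closure (Set.mem_insert_of_mem _ (Set.mem_insert_of_mem _ (Set.mem_insert_of_mem _ (Set.mem_insert_of_mem _ (Set.mem_insert_of_mem _ (Set.mem_insert_of_mem _ (Set.mem_insert_of_mem _ (Set.mem_insert_of_mem _ (Set.mem_insert_of_mem _ (Set.mem_insert_of_mem _ (Set.mem_insert_of_mem _ (Set.mem_insert_of_mem _ (Set.mem_insert_of_mem _ (Set.mem_insert_of_mem _ (Set.mem_insert_of_mem _ (Set.mem_insert_of_mem _ (Set.mem_insert_of_mem _ (Set.mem_insert_of_mem _ (Set.mem_insert_of_mem _ (Set.mem_insert _ _))))))))))))))))))))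
  have g20 : threeCycle 20 21 12 ∈ Subgroup.closure clusterGenerators :=
    Subgroup.subset_closure (Set.mem_insert_of_mem _ (Set.mem_insert_of_mem _ (Set.mem_insert_of_mem _ (Set.mem_insert_of_mem _ (Set.mem_insert_of_mem _ (Set.mem_insert_of_mem _ (Set.mem_insert_of_mem _ (Set.mem_insert_of_mem _ (Set.mem_insert_of_mem _ (Set.mem_insert_of_mem _ (Set.mem_insert_of_mem _ (Set.mem_insert_of_mem _ (Set.mem_insert_of_mem _ (Set.mem_insert_of_mem _ (Set.mem_insert_of_mem _ (Set.mem_insert_of_mem _ (Set.mem_insert_of_mem _ (Set.mem_insert_of_mem _ (Set.mem_insert_of_mem _ (Set.mem_insert_of_mem _ (Set.mem_insert _ _)))))))))))))))))))))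
  have g21 : threeCycle 23 22 14 ∈ Subgroup.closure clusterGenerators :=
    Subgroup.subset_closure (Set.mem_insert_of_mem _ (Set.mem_insert_of_mem _ (Set.mem_insert_of_mem _ (Set.mem_insert_of_mem _ (Set.mem_insert_of_mem _ (Set.mem_insert_of_mem _ (Set.mem_insert_of_mem _ (Set.mem_insert_of_mem _ (Set.mem_insert_of_mem _ (Set.mem_insert_of_mem _ (Set.mem_insert_of_mem _ (Set.mem_insert_of_mem _ (Set.mem_insert_of_mem _ (Set.mem_insert_of_mem _ (Set.mem_insert_of_mem _ (Set.mem_insert_of_mem _ (Set.mem_insert_of_mem _ (Set.mem_insert_of_mem _ (Set.mem_insert_of_mem _ (Set.mem_insert_of_mem _ (Set.mem_insert_of_mem _ (Set.mem_insert _ _))))))))))))))))))))))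
  have g22 : threeCycle 21 23 15 ∈ Subgroup.closure clusterGenerators :=
    Subgroup.subset_closure (Set.mem_insert_of_mem _ (Set.mem_insert_of_mem _ (Set.mem_insert_of_mem _ (Set.mem_insert_of_mem _ (Set.mem_insert_of_mem _ (Set.mem_insert_of_mem _ (Set.mem_insert_of_mem _ (Set.mem_insert_of_mem _ (Set.mem_insert_of_mem _ (Set.mem_insert_of_mem _ (Set.mem_insert_of_mem _ (Set.mem_insert_of_mem _ (Set.mem_insert_of_mem _ (Set.mem_insert_of_mem _ (Set.mem_insert_of_mem _ (Set.mem_insert_of_mem _ (Set.mem_insert_of_mem _ (Set.mem_insert_of_mem _ (Set.mem_insert_of_mem _ (Set.mem_insert_of_mem _ (Set.mem_insert_of_mem _ (Set.mem_insert_of_mem _ (Set.mem_insert _ _)))))))))))))))))))))))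
  have g23 : threeCycle 22 20 13 ∈ Subgroup.closure clusterGenerators :=
    Subgroup.subset_closure (Set.mem_insert_of_mem _ (Set.mem_insert_of_mem _ (Set.mem_insert_of_mem _ (Set.mem_insert_of_mem _ (Set.mem_insert_of_mem _ (Set.mem_insert_of_mem _ (Set.mem_insert_of_mem _ (Set.mem_insert_of_mem _ (Set.mem_insert_of_mem _ (Set.mem_insert_of_mem _ (Set.mem_insert_of_mem _ (Set.mem_insert_of_mem _ (Set.mem_insert_of_mem _ (Set.mem_insert_of_mem _ (Set.mem_insert_of_mem _ (Set.mem_insert_of_mem _ (Set.mem_insert_of_mem _ (Set.mem_insert_of_mem _ (Set.mem_insert_of_mem _ (Set.mem_insert_of_mem _ (Set.mem_insert_of_mem _ (Set.mem_insert_of_mem _ (Set.mem_insert_of_mem _ (Set.mem_singleton _))))))))))))))))))))))))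
  have w2 : threeCycle 0 1 2 ∈ Subgroup.closure clusterGenerators := by
    rw [show (threeCycle 0 1 2 : Equiv.Perm (Fin 24)) = (threeCycle 0 1 11)⁻¹ * ((threeCycle 2 0 8)⁻¹ * (threeCycle 0 1 11) * (threeCycle 2 0 8)) * (threeCycle 0 1 11) by decide]
    exact mul_mem (mul_mem (inv_mem g0) (mul_mem (mul_mem (inv_mem g3) (g0)) g3)) g0
  have w3 : threeCycle 0 1 3 ∈ Subgroup.closure clusterGenerators := by
    rw [show (threeCycle 0 1 3 : Equiv.Perm (Fin 24)) = (threeCycle 0 1 11) * ((threeCycle 1 3 10) * (threeCycle 0 1 11) * (threeCycle 1 3 10)⁻¹) * (threeCycle 0 1 11)⁻¹ by decide]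
    exact mul_mem (mul_mem g0 (mul_mem (mul_mem g2 (g0)) (inv_mem g2))) (inv_mem g0)
  have w4 : threeCycle 0 1 4 ∈ Subgroup.closure clusterGenerators := by
    rw [show (threeCycle 0 1 4 : Equiv.Perm (Fin 24)) = (threeCycle 4 11 7)⁻¹ * (threeCycle 0 1 11) * (threeCycle 4 11 7) by decide]
    exact mul_mem (mul_mem (inv_mem g4) (g0)) g4
  have w5 : threeCycle 0 1 5 ∈ Subgroup.closure clusterGenerators := by
    rw [show (threeCycle 0 1 5 : Equiv.Perm (Fin 24)) = (threeCycle 5 10 4) * ((threeCycle 4 11 7)⁻¹ * (threeCycle 0 1 11) * (threeCycle 4 11 7)) * (threeCycle 5 10 4)⁻¹ by decide]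
    exact mul_mem (mul_mem g8 (mul_mem (mul_mem (inv_mem g4) (g0)) g4)) (inv_mem g8)
  have w6 : threeCycle 0 1 6 ∈ Subgroup.closure clusterGenerators := by
    rw [show (threeCycle 0 1 6 : Equiv.Perm (Fin 24)) = (threeCycle 7 8 6)⁻¹ * ((threeCycle 4 11 7) * (threeCycle 0 1 11) * (threeCycle 4 11 7)⁻¹) * (threeCycle 7 8 6) by decide]
    exact mul_mem (mul_mem (inv_mem g16) (mul_mem (mul_mem g4 (g0)) (inv_mem g4))) g16
  have w7 : threeCycle 0 1 7 ∈ Subgroup.closure clusterGenerators := by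
    rw [show (threeCycle 0 1 7 : Equiv.Perm (Fin 24)) = (threeCycle 4 11 7) * (threeCycle 0 1 11) * (threeCycle 4 11 7)⁻¹ by decide]
    exact mul_mem (mul_mem g4 (g0)) (inv_mem g4)
  have w8 : threeCycle 0 1 8 ∈ Subgroup.closure clusterGenerators := by
    rw [show (threeCycle 0 1 8 : Equiv.Perm (Fin 24)) = (threeCycle 0 1 11)⁻¹ * ((threeCycle 2 0 8) * (threeCycle 0 1 11) * (threeCycle 2 0 8)⁻¹) * (threeCycle 0 1 11) by decide]
    exact mul_mem (mul_mem (inv_mem g0) (mul_mem (mul_mem g3 (g0)) (inv_mem g3))) g0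
  have w9 : threeCycle 0 1 9 ∈ Subgroup.closure clusterGenerators := by
    rw [show (threeCycle 0 1 9 : Equiv.Perm (Fin 24)) = (threeCycle 3 2 9)⁻¹ * ((threeCycle 0 1 11) * ((threeCycle 1 3 10) * (threeCycle 0 1 11) * (threeCycle 1 3 10)⁻¹) * (threeCycle 0 1 11)⁻¹) * (threeCycle 3 2 9) by decide]
    exact mul_mem (mul_mem (inv_mem g1) (mul_mem (mul_mem g0 (mul_mem (mul_mem g2 (g0)) (inv_mem g2))) (inv_mem g0))) g1
  have w10 : threeCycle 0 1 10 ∈ Subgroup.closure clusterGenerators := by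
    rw [show (threeCycle 0 1 10 : Equiv.Perm (Fin 24)) = (threeCycle 0 1 11) * ((threeCycle 1 3 10)⁻¹ * (threeCycle 0 1 11) * (threeCycle 1 3 10)) * (threeCycle 0 1 11)⁻¹ by decide]
    exact mul_mem (mul_mem g0 (mul_mem (mul_mem (inv_mem g2) (g0)) g2)) (inv_mem g0)
  have w11 : threeCycle 0 1 11 ∈ Subgroup.closure clusterGenerators := by
    rw [show (threeCycle 0 1 11 : Equiv.Perm (Fin 24)) = threeCycle 0 1 11 by decide]
    exact g0
  have w12 : threeCycle 0 1 12 ∈ Subgroup.closure clusterGenerators := by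
    rw [show (threeCycle 0 1 12 : Equiv.Perm (Fin 24)) = (threeCycle 12 4 3)⁻¹ * ((threeCycle 4 11 7)⁻¹ * (threeCycle 0 1 11) * (threeCycle 4 11 7)) * (threeCycle 12 4 3) by decide]
    exact mul_mem (mul_mem (inv_mem g7) (mul_mem (mul_mem (inv_mem g4) (g0)) g4)) g7
  have w13 : threeCycle 0 1 13 ∈ Subgroup.closure clusterGenerators := by
    rw [show (threeCycle 0 1 13 : Equiv.Perm (Fin 24)) = (threeCycle 13 5 2) * ((threeCycle 0 1 11)⁻¹ * ((threeCycle 2 0 8)⁻¹ * (threeCycle 0 1 11) * (threeCycle 2 0 8)) * (threeCycle 0 1 11)) * (threeCycle 13 5 2)⁻¹ by decide]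
    exact mul_mem (mul_mem g11 (mul_mem (mul_mem (inv_mem g0) (mul_mem (mul_mem (inv_mem g3) (g0)) g3)) g0)) (inv_mem g11)
  have w14 : threeCycle 0 1 14 ∈ Subgroup.closure clusterGenerators := by
    rw [show (threeCycle 0 1 14 : Equiv.Perm (Fin 24)) = (threeCycle 23 22 14)⁻¹ * ((threeCycle 11 19 23)⁻¹ * (threeCycle 0 1 11) * (threeCycle 11 19 23)) * (threeCycle 23 22 14) by decide]
    exact mul_mem (mul_mem (inv_mem g21) (mul_mem (mul_mem (inv_mem g6) (g0)) g6)) g21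
  have w15 : threeCycle 0 1 15 ∈ Subgroup.closure clusterGenerators := by
    rw [show (threeCycle 0 1 15 : Equiv.Perm (Fin 24)) = (threeCycle 16 15 19)⁻¹ * ((threeCycle 11 19 23) * (threeCycle 0 1 11) * (threeCycle 11 19 23)⁻¹) * (threeCycle 16 15 19) by decide]
    exact mul_mem (mul_mem (inv_mem g17) (mul_mem (mul_mem g6 (g0)) (inv_mem g6))) g17
  have w16 : threeCycle 0 1 16 ∈ Subgroup.closure clusterGenerators := by
    rw [show (threeCycle 0 1 16 : Equiv.Perm (Fin 24)) = (threeCycle 16 15 19) * ((threeCycle 11 19 23) * (threeCycle 0 1 11) * (threeCycle 11 19 23)⁻¹) * (threeCycle 16 15 19)⁻¹ by decide]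
    exact mul_mem (mul_mem g17 (mul_mem (mul_mem g6 (g0)) (inv_mem g6))) (inv_mem g17)
  have w17 : threeCycle 0 1 17 ∈ Subgroup.closure clusterGenerators := by
    rw [show (threeCycle 0 1 17 : Equiv.Perm (Fin 24)) = (threeCycle 18 13 17)⁻¹ * ((threeCycle 19 12 18)⁻¹ * ((threeCycle 11 19 23) * (threeCycle 0 1 11) * (threeCycle 11 19 23)⁻¹) * (threeCycle 19 12 18)) * (threeCycle 18 13 17) by decide]
    exact mul_mem (mul_mem (inv_mem g9) (mul_mem (mul_mem (inv_mem g5) (mul_mem (mul_mem g6 (g0)) (inv_mem g6))) g5)) g9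
  have w18 : threeCycle 0 1 18 ∈ Subgroup.closure clusterGenerators := by
    rw [show (threeCycle 0 1 18 : Equiv.Perm (Fin 24)) = (threeCycle 19 12 18)⁻¹ * ((threeCycle 11 19 23) * (threeCycle 0 1 11) * (threeCycle 11 19 23)⁻¹) * (threeCycle 19 12 18) by decide]
    exact mul_mem (mul_mem (inv_mem g5) (mul_mem (mul_mem g6 (g0)) (inv_mem g6))) g5
  have w19 : threeCycle 0 1 19 ∈ Subgroup.closure clusterGenerators := by
    rw [show (threeCycle 0 1 19 : Equiv.Perm (Fin 24)) = (threeCycle 11 19 23) * (threeCycle 0 1 11) * (threeCycle 11 19 23)⁻¹ by decide]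
    exact mul_mem (mul_mem g6 (g0)) (inv_mem g6)
  have w20 : threeCycle 0 1 20 ∈ Subgroup.closure clusterGenerators := by
    rw [show (threeCycle 0 1 20 : Equiv.Perm (Fin 24)) = (threeCycle 20 21 12) * ((threeCycle 12 4 3)⁻¹ * ((threeCycle 4 11 7)⁻¹ * (threeCycle 0 1 11) * (threeCycle 4 11 7)) * (threeCycle 12 4 3)) * (threeCycle 20 21 12)⁻¹ by decide]
    exact mul_mem (mul_mem g20 (mul_mem (mul_mem (inv_mem g7) (mul_mem (mul_mem (inv_mem g4) (g0)) g4)) g7)) (inv_mem g20)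
  have w21 : threeCycle 0 1 21 ∈ Subgroup.closure clusterGenerators := by
    rw [show (threeCycle 0 1 21 : Equiv.Perm (Fin 24)) = (threeCycle 21 23 15)⁻¹ * ((threeCycle 11 19 23)⁻¹ * (threeCycle 0 1 11) * (threeCycle 11 19 23)) * (threeCycle 21 23 15) by decide]
    exact mul_mem (mul_mem (inv_mem g22) (mul_mem (mul_mem (inv_mem g6) (g0)) g6)) g22
  have w22 : threeCycle 0 1 22 ∈ Subgroup.closure clusterGenerators := by
    rw [show (threeCycle 0 1 22 : Equiv.Perm (Fin 24)) = (threeCycle 23 22 14) * ((threeCycle 11 19 23)⁻¹ * (threeCycle 0 1 11) * (threeCycle 11 19 23)) * (threeCycle 23 22 14)⁻¹ by decide]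
    exact mul_mem (mul_mem g21 (mul_mem (mul_mem (inv_mem g6) (g0)) g6)) (inv_mem g21)
  have w23 : threeCycle 0 1 23 ∈ Subgroup.closure clusterGenerators := by
    rw [show (threeCycle 0 1 23 : Equiv.Perm (Fin 24)) = (threeCycle 11 19 23)⁻¹ * (threeCycle 0 1 11) * (threeCycle 11 19 23) by decide]
    exact mul_mem (mul_mem (inv_mem g6) (g0)) g6
  intro k hk0 hk1
  fin_cases k
  · exact absurd rfl hk0
  · exact absurd rfl hk1
  · exact w2
  · exact w3
  · exact w4
  · exact w5
  · exact w6
  · exact w7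
  · exact w8
  · exact w9
  · exact w10
  · exact w11
  · exact w12
  · exact w13
  · exact w14
  · exact w15
  · exact w16
  · exact w17
  · exact w18
  · exact w19
  · exact w20
  · exact w21
  · exact w22
  · exact w23

private lemma claimA {b c : Fin 24} (hbc : b ≠ c) (hb0 : b ≠ 0) (hc0 : c ≠ 0) :
    threeCycle 0 b c ∈ Subgroup.closure clusterGenerators := by
  by_cases hb1 : b = 1
  · subst hb1; exact tmem c hc0 (Ne.symm hbc)
  by_cases hc1 : c = 1
  · subst hc1
    rw [← tc_inv 0 1 b]
    exact inv_mem (tmem b hb0 hb1)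
  · have h1 : threeCycle 0 c 1 ∈ Subgroup.closure clusterGenerators := by
      rw [← tc_inv 0 1 c]
      exact inv_mem (tmem c hc0 hc1)
    have h2 := tmem b hb0 hb1
    have key : threeCycle 0 c 1 * threeCycle 0 1 b * (threeCycle 0 c 1)⁻¹ =
        threeCycle 0 b c := by
      rw [tc_conj]
      rw [tc_apply₁ (Ne.symm hc0) hc1, tc_apply₃ (show (0:Fin 24) ≠ 1 by decide) hc1,
        tc_apply₄ hb0 hbc hb1]
      exact tc_rot hc0 (Ne.symm hbc) (Ne.symm hb0)
    rw [← key]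
    exact mul_mem (mul_mem h1 h2) (inv_mem h1)

private lemma claimB {b c : Fin 24} (hbc : b ≠ c) (hb0 : b ≠ 0) (hb1 : b ≠ 1)
    (hc0 : c ≠ 0) (hc1 : c ≠ 1) :
    threeCycle 1 b c ∈ Subgroup.closure clusterGenerators := by
  have key : threeCycle 0 1 b * threeCycle 0 1 c * (threeCycle 0 1 b)⁻¹ =
      threeCycle 1 b c := by
    rw [tc_conj, tc_apply₁ (show (0:Fin 24) ≠ 1 by decide) (Ne.symm hb1), tc_apply₂,
      tc_apply₄ hc0 hc1 (Ne.symm hbc)]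
  rw [← key]
  exact mul_mem (mul_mem (tmem b hb0 hb1) (tmem c hc0 hc1)) (inv_mem (tmem b hb0 hb1))

private lemma tc_mem {a b c : Fin 24} (hab : a ≠ b) (hac : a ≠ c) (hbc : b ≠ c) :
    threeCycle a b c ∈ Subgroup.closure clusterGenerators := by
  by_cases ha0 : a = 0
  · subst ha0; exact claimA hbc (Ne.symm hab) (Ne.symm hac)
  by_cases hb0 : b = 0
  · subst hb0
    rw [tc_rot hab hac hbc]
    exact claimA (Ne.symm hac) (Ne.symm hbc) ha0
  by_cases hc0 : c = 0
  · subst hc0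
    rw [tc_rot hab hac hbc, tc_rot hbc (Ne.symm hab) (Ne.symm hac)]
    exact claimA hab ha0 hb0
  by_cases ha1 : a = 1
  · subst ha1; exact claimB hbc hb0 (Ne.symm hab) hc0 (Ne.symm hac)
  by_cases hb1 : b = 1
  · subst hb1
    rw [tc_rot hab hac hbc]
    exact claimB (Ne.symm hac) hc0 (Ne.symm hbc) ha0 ha1
  by_cases hc1 : c = 1
  · subst hc1
    rw [tc_rot hab hac hbc, tc_rot hbc (Ne.symm hab) (Ne.symm hac)]
    exact claimB hab ha0 ha1 hb0 hb1
  · have key : threeCycle 0 1 a * threeCycle 1 b c * (threeCycle 0 1 a)⁻¹ =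
        threeCycle a b c := by
      rw [tc_conj, tc_apply₂, tc_apply₄ hb0 hb1 (Ne.symm hab),
        tc_apply₄ hc0 hc1 (Ne.symm hac)]
    rw [← key]
    exact mul_mem (mul_mem (tmem a ha0 ha1) (claimB hbc hb0 hb1 hc0 hc1))
      (inv_mem (tmem a ha0 ha1))

private lemma isThreeCycle_eq_tc {σ : Equiv.Perm (Fin 24)} (h : IsThreeCycle σ) :
    ∃ a b c : Fin 24, a ≠ b ∧ a ≠ c ∧ b ≠ c ∧ σ = threeCycle a b c := by
  obtain ⟨a, ha, -⟩ := h.isCycle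
  have h3 : σ ^ 3 = 1 := by rw [← h.orderOf]; exact pow_orderOf_eq_one σ
  have hcyc : σ (σ (σ a)) = a := by
    have h4 : (σ ^ 3) a = a := by rw [h3]; rfl
    simpa [pow_succ, pow_zero, one_mul, Equiv.Perm.mul_apply] using h4
  have hab : a ≠ σ a := Ne.symm ha
  have hac : a ≠ σ (σ a) := fun e => ha ((congrArg σ e).trans hcyc)
  have hbc : σ a ≠ σ (σ a) := fun e => ha (σ.injective e).symm
  refine ⟨a, σ a, σ (σ a), hab, hac, hbc, ?_⟩
  have hsupp : σ.support = {a, σ a, σ (σ a)} := by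
    refine (Finset.eq_of_subset_of_card_le ?_ ?_).symm
    · intro x hx
      simp only [Finset.mem_insert, Finset.mem_singleton] at hx
      rcases hx with rfl | rfl | rfl
      · exact Equiv.Perm.mem_support.2 ha
      · exact Equiv.Perm.mem_support.2 (Ne.symm hbc)
      · refine Equiv.Perm.mem_support.2 fun e => ?_
        rw [hcyc] at e
        exact hac e
    · rw [h.card_support]
      exact le_of_eq (Finset.card_eq_three.2 ⟨a, σ a, σ (σ a), hab, hac, hbc, rfl⟩).symm
  apply Equiv.ext
  intro x
  by_cases hxa : x = a
  · subst hxa; rw [tc_apply₁ hab hbc]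
  by_cases hxb : x = σ a
  · subst hxb; rw [tc_apply₂]
  by_cases hxc : x = σ (σ a)
  · subst hxc; rw [tc_apply₃ hac hbc]; exact hcyc
  · rw [tc_apply₄ hxa hxb hxc]
    exact Equiv.Perm.notMem_support.1 (by
      rw [hsupp]
      simp [Finset.mem_insert, Finset.mem_singleton, hxa, hxb, hxc])

/-- **The 24 listed three-cycles generate the alternating group on 24
elements.** -/
theorem closure_clusterGenerators_eq_alternatingGroup :
    Subgroup.closure clusterGenerators = alternatingGroup (Fin 24) := by
  apply le_antisymm
  · rw [Subgroup.closure_le]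
    intro g hg
    simp only [clusterGenerators, Set.mem_insert_iff, Set.mem_singleton_iff] at hg
    rcases hg with rfl|rfl|rfl|rfl|rfl|rfl|rfl|rfl|rfl|rfl|rfl|rfl|rfl|rfl|rfl|rfl|rfl|rfl|rfl|rfl|rfl|rfl|rfl|rfl
    all_goals exact (tc_isThreeCycle (by decide) (by decide) (by decide)).mem_alternatingGroup
  · rw [← Equiv.Perm.closure_three_cycles_eq_alternating, Subgroup.closure_le]
    intro σ hσ
    obtain ⟨a, b, c, hab, hac, hbc, rfl⟩ := isThreeCycle_eq_tc hσ
    exact tc_mem hab hac hbc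
end
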